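/- arXiv:1506.01264 — 5 statements merged into one kernel-verified Lean document; each statement's English description precedes it below -/
import Mathlib

section
/- Fix an integer n ≥ 1, and let Σ be the collection of all paths σ : I_k → I_n (for all 1 ≤ k ≤ n) satisfying the two properties: (i) the range of σ contains I_{k−1}; (ii) for every j ≤ k, the set I_j contains at least j−1 elements of the image σ(I_j). Then Σ is an admissible collection of paths in I_n; that is: (1) for each j ∈ I_n there is a path σ ∈ Σ of length one with σ(1) = j; (2) for each path σ̃ ∈ Σ of any length k < n there is a path σ ∈ Σ of length k+1 whose restriction to I_k coincides with σ̃; (3) for each path σ ∈ Σ of any length k ≥ 2 there is a path τ ∈ Σ of the same length k which coincides with σ on I_{k−2} and satisfies σ(k−1) = τ(k) and τ(k−1) = σ(k). -/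
/-- The specific collection of paths from the paper: an injective `σ : Fin k → Fin n`
(a path in `I_n` of length `k`, written 0-indexed) such that
(i) the range of `σ` contains `I_{k-1}` (the first `k-1` elements of `Fin n`), and
(ii) for every `j ≤ k`, the set `I_j` (first `j` elements) contains at least `j-1`
elements of the image of `I_j` under `σ`. -/
def GoodPath (n k : ℕ) (σ : Fin k → Fin n) : Prop :=
  Function.Injective σ ∧
  (∀ j : Fin n, (j : ℕ) < k - 1 → j ∈ Set.range σ) ∧
  (∀ j : ℕ, 1 ≤ j → j ≤ k →
    j - 1 ≤ (Finset.univ.filter fun l : Fin k => (l : ℕ) < j ∧ ((σ l : Fin n) : ℕ) < j).card)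

lemma card_filter_lt_ge (n m : ℕ) (hm : m ≤ n) :
    m ≤ (Finset.univ.filter fun v : Fin n => (v : ℕ) < m).card := by
  have h := Finset.card_le_card_of_injOn
    (f := fun i : Fin m => (⟨(i : ℕ), lt_of_lt_of_le i.isLt hm⟩ : Fin n))
    (s := (Finset.univ : Finset (Fin m)))
    (t := Finset.univ.filter fun v : Fin n => (v : ℕ) < m)
    (by intro i _; simp [i.isLt])
    (by intro x _ y _ h; simpa [Fin.ext_iff] using h)
  simpa using h

/-- The collection of all `GoodPath`s is an admissible collection of paths in `I_n`. -/
theorem goodPaths_admissible (n : ℕ) (hn : 1 ≤ n) :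
    (∀ j : Fin n, ∃ σ : Fin 1 → Fin n, GoodPath n 1 σ ∧ σ 0 = j) ∧
    (∀ k : ℕ, 1 ≤ k → k < n → ∀ σt : Fin k → Fin n, GoodPath n k σt →
      ∃ σ : Fin (k + 1) → Fin n, GoodPath n (k + 1) σ ∧ ∀ i : Fin k, σ i.castSucc = σt i) ∧
    (∀ k : ℕ, 2 ≤ k → k ≤ n → ∀ σ : Fin k → Fin n, GoodPath n k σ →
      ∃ τ : Fin k → Fin n, GoodPath n k τ ∧
        (∀ i : Fin k, (i : ℕ) < k - 2 → τ i = σ i) ∧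
        ∀ (h1 : k - 2 < k) (h2 : k - 1 < k),
          σ ⟨k - 2, h1⟩ = τ ⟨k - 1, h2⟩ ∧ τ ⟨k - 2, h1⟩ = σ ⟨k - 1, h2⟩) := by
  refine ⟨?_, ?_, ?_⟩
  · -- Part 1: constant paths of length 1
    intro j
    refine ⟨fun _ => j, ⟨fun a b _ => Subsingleton.elim a b, ?_, ?_⟩, rfl⟩
    · intro i hi; omega
    · intro j h1 h2; omega
  · -- Part 2: extension
    intro k hk hkn σt hG
    obtain ⟨hinj, hrange, hcard⟩ := hG
    have hk1n : k - 1 < n := by omega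
    -- a value outside the range exists
    have hmiss : ∃ v : Fin n, v ∉ Set.range σt := by
      by_contra h
      push_neg at h
      have hsurj : Function.Surjective σt := fun v => h v
      have := Fintype.card_le_of_surjective σt hsurj
      simp at this; omega
    obtain ⟨v, hv, hcover⟩ : ∃ v : Fin n, v ∉ Set.range σt ∧
        ∀ j : Fin n, (j : ℕ) < k → (j ∈ Set.range σt ∨ j = v) := by
      by_cases hmem : (⟨k - 1, hk1n⟩ : Fin n) ∈ Set.range σt
      · obtain ⟨v, hv⟩ := hmiss
        refine ⟨v, hv, fun j hj => Or.inl ?_⟩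
        by_cases hj' : (j : ℕ) < k - 1
        · exact hrange j hj'
        · have : j = (⟨k - 1, hk1n⟩ : Fin n) := by
            apply Fin.ext; show (j : ℕ) = k - 1; omega
          rw [this]; exact hmem
      · refine ⟨_, hmem, fun j hj => ?_⟩
        by_cases hj' : (j : ℕ) < k - 1
        · exact Or.inl (hrange j hj')
        · refine Or.inr (Fin.ext ?_); show (j : ℕ) = k - 1; omega
    set σ : Fin (k + 1) → Fin n := Fin.snoc σt v with hσ
    have hsc : ∀ i : Fin k, σ i.castSucc = σt i := by
      intro i; rw [hσ]; simp
    have hsl : σ (Fin.last k) = v := by rw [hσ]; simp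
    have hinjσ : Function.Injective σ := by
      intro a b hab
      induction a using Fin.lastCases with
      | last =>
        induction b using Fin.lastCases with
        | last => rfl
        | cast b =>
          rw [hsl, hsc] at hab
          exact absurd ⟨b, hab.symm⟩ hv
      | cast a =>
        induction b using Fin.lastCases with
        | last =>
          rw [hsl, hsc] at hab
          exact absurd ⟨a, hab⟩ hv
        | cast b =>
          rw [hsc, hsc] at hab
          exact congrArg Fin.castSucc (hinj hab)
    have hrangeσ : ∀ j : Fin n, (j : ℕ) < k → j ∈ Set.range σ := by
      intro j hj
      rcases hcover j hj with ⟨l, hl⟩ | rfl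
      · exact ⟨l.castSucc, by rw [hsc]; exact hl⟩
      · exact ⟨Fin.last k, hsl⟩
    refine ⟨σ, ⟨hinjσ, ?_, ?_⟩, hsc⟩
    · intro j hj
      exact hrangeσ j (by omega)
    · intro j h1 h2
      by_cases hjk : j ≤ k
      · have key : (Finset.univ.filter fun l : Fin k =>
            (l : ℕ) < j ∧ ((σt l : Fin n) : ℕ) < j).card ≤
            (Finset.univ.filter fun l : Fin (k + 1) =>
            (l : ℕ) < j ∧ ((σ l : Fin n) : ℕ) < j).card := by
          apply Finset.card_le_card_of_injOn (f := Fin.castSucc)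
          · intro l hl
            simp only [Finset.mem_coe, Finset.mem_filter, Finset.mem_univ, true_and] at hl ⊢
            rw [hsc]
            simpa using hl
          · exact (Fin.castSucc_injective k).injOn
        exact le_trans (hcard j h1 hjk) key
      · have hj : j = k + 1 := by omega
        subst hj
        have : Nonempty (Fin (k + 1)) := ⟨0⟩
        have hle := card_filter_lt_ge n k (le_of_lt hkn)
        have key : (Finset.univ.filter fun w : Fin n => (w : ℕ) < k).card ≤
            (Finset.univ.filter fun l : Fin (k + 1) =>
            (l : ℕ) < k + 1 ∧ ((σ l : Fin n) : ℕ) < k + 1).card := by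
          apply Finset.card_le_card_of_injOn (f := fun w => Function.invFun σ w)
          · intro w hw
            simp only [Finset.mem_coe, Finset.mem_filter, Finset.mem_univ, true_and] at hw ⊢
            have hwr := hrangeσ w hw
            have heq : σ (Function.invFun σ w) = w := Function.invFun_eq hwr
            refine ⟨(Function.invFun σ w).isLt, ?_⟩
            rw [heq]; omega
          · intro x hx y hy hxy
            simp only [Finset.mem_coe, Finset.mem_filter, Finset.mem_univ, true_and] at hx hy
            calc x = σ (Function.invFun σ x) := (Function.invFun_eq (hrangeσ x hx)).symm
              _ = σ (Function.invFun σ y) := congrArg σ hxy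
              _ = y := Function.invFun_eq (hrangeσ y hy)
        calc k + 1 - 1 = k := by omega
          _ ≤ _ := le_trans hle key
  · -- Part 3: swap the last two
    intro k hk2 hkn σ hG
    obtain ⟨hinj, hrange, hcard⟩ := hG
    have h1 : k - 2 < k := by omega
    have h2 : k - 1 < k := by omega
    have : Nonempty (Fin k) := ⟨⟨0, by omega⟩⟩
    set a : Fin k := ⟨k - 2, h1⟩ with ha
    set b : Fin k := ⟨k - 1, h2⟩ with hb
    have hab : a ≠ b := by
      intro h
      have := congrArg Fin.val h
      simp [ha, hb] at this; omega
    set e := Equiv.swap a b with he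
    set τ : Fin k → Fin n := fun l => σ (e l) with hτ
    have hee : ∀ l, e (e l) = l := fun l => Equiv.swap_apply_self a b l
    have hτinj : Function.Injective τ := hinj.comp e.injective
    have hτrange : ∀ j : Fin n, (j : ℕ) < k - 1 → j ∈ Set.range τ := by
      intro j hj
      obtain ⟨l, hl⟩ := hrange j hj
      refine ⟨e.symm l, ?_⟩
      show σ (e (e.symm l)) = j
      rw [e.apply_symm_apply]; exact hl
    refine ⟨τ, ⟨hτinj, hτrange, ?_⟩, ?_, ?_⟩
    · -- the card condition
      intro j hj1 hjk
      by_cases hA : j ≤ k - 2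
      · have hfeq : (Finset.univ.filter fun l : Fin k =>
            (l : ℕ) < j ∧ ((τ l : Fin n) : ℕ) < j)
            = (Finset.univ.filter fun l : Fin k => (l : ℕ) < j ∧ ((σ l : Fin n) : ℕ) < j) := by
          apply Finset.filter_congr
          intro l _
          by_cases hl : (l : ℕ) < j
          · have hla : l ≠ a := by
              intro h; rw [h] at hl; simp [ha] at hl; omega
            have hlb : l ≠ b := by
              intro h; rw [h] at hl; simp [hb] at hl; omega
            have : e l = l := Equiv.swap_apply_of_ne_of_ne hla hlb
            simp [hτ, this]
          · simp [hl]
        rw [hfeq]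
        exact hcard j hj1 (by omega)
      · by_cases hB : j = k - 1
        · -- the interesting case
          subst hB
          have hle := card_filter_lt_ge n (k - 1) (by omega)
          set s0 := Finset.univ.filter fun w : Fin n => (w : ℕ) < k - 1 with hs0
          set s := s0.erase (σ a) with hs
          have hscard : k - 2 ≤ s.card := by
            have h := Finset.pred_card_le_card_erase (s := s0) (a := σ a)
            rw [← hs] at h
            omega
          have key : s.card ≤ (Finset.univ.filter fun l : Fin k =>
              (l : ℕ) < k - 1 ∧ ((τ l : Fin n) : ℕ) < k - 1).card := by
            apply Finset.card_le_card_of_injOn (f := fun w => e (Function.invFun σ w))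
            · intro w hw
              simp only [hs, hs0, Finset.mem_coe, Finset.mem_erase, Finset.mem_filter,
                Finset.mem_univ, true_and] at hw
              obtain ⟨hwa, hwlt⟩ := hw
              have hwr : w ∈ Set.range σ := hrange w hwlt
              have heq : σ (Function.invFun σ w) = w := Function.invFun_eq hwr
              set l := Function.invFun σ w with hl
              have hla : l ≠ a := by
                intro h; apply hwa; rw [← heq, h]
              simp only [Finset.mem_coe, Finset.mem_filter, Finset.mem_univ, true_and]
              constructor
              · by_cases hlb : l = b
                · have heb : e b = a := Equiv.swap_apply_right a b
                  rw [← hl, hlb, heb]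
                  show k - 2 < k - 1
                  omega
                · have hel : e l = l := Equiv.swap_apply_of_ne_of_ne hla hlb
                  rw [hel]
                  have hlk := l.isLt
                  have hlne : (l : ℕ) ≠ k - 1 := by
                    intro h
                    exact hlb (Fin.ext (by rw [h, hb]))
                  omega
              · show ((τ (e l) : Fin n) : ℕ) < k - 1
                have hτel : τ (e l) = σ l := by
                  show σ (e (e l)) = σ l
                  rw [hee]
                rw [hτel, heq]; exact hwlt
            · intro x hx y hy hxy
              simp only [hs, hs0, Finset.mem_coe, Finset.mem_erase, Finset.mem_filter,
                Finset.mem_univ, true_and] at hx hy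
              have h' := e.injective hxy
              calc x = σ (Function.invFun σ x) := (Function.invFun_eq (hrange x hx.2)).symm
                _ = σ (Function.invFun σ y) := by rw [h']
                _ = y := Function.invFun_eq (hrange y hy.2)
          omega
        · have hj : k = j := by omega
          subst hj
          have key : (Finset.univ.filter fun l : Fin k =>
              (l : ℕ) < k ∧ ((σ l : Fin n) : ℕ) < k).card ≤
              (Finset.univ.filter fun l : Fin k =>
              (l : ℕ) < k ∧ ((τ l : Fin n) : ℕ) < k).card := by
            apply Finset.card_le_card_of_injOn (f := fun l => e.symm l)
            · intro l hl
              simp only [Finset.mem_coe, Finset.mem_filter, Finset.mem_univ, true_and] at hl ⊢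
              refine ⟨(e.symm l).isLt, ?_⟩
              have hts : τ (e.symm l) = σ l := by
                show σ (e (e.symm l)) = σ l
                rw [e.apply_symm_apply]
              rw [hts]; exact hl.2
            · exact e.symm.injective.injOn
          exact le_trans (hcard k hj1 le_rfl) key
    · -- agreement below k - 2
      intro i hi
      have hia : i ≠ a := by
        intro h; rw [h] at hi; simp [ha] at hi
      have hib : i ≠ b := by
        intro h; rw [h] at hi; simp [hb] at hi; omega
      show σ (e i) = σ i
      rw [Equiv.swap_apply_of_ne_of_ne hia hib]
    · -- the swap equalities
      intro h1' h2'
      constructor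
      · show σ a = σ (e b)
        rw [he, Equiv.swap_apply_right]
      · show σ (e a) = σ b
        rw [he, Equiv.swap_apply_left]
end

section
/- Let d ≥ 1 and n ≥ 1 be integers, let Q be a dyadic cube in ℝ^d, let p_1,…,p_n ∈ (1,∞), let f_1,…,f_n with f_j ∈ L^{p_j}(ℝ^d) and ‖f_j‖_{p_j} > 0 for each j, and let ε > 0. Let 𝒫₁ be the collection of maximal dyadic cubes P contained in Q for which there exists some 1 ≤ j ≤ n with |P|^{−1}‖f_j·1_P‖_{p_j}^{p_j} ≥ n·ε^{−1}·|Q|^{−1}‖f_j‖_{p_j}^{p_j}. Then the cubes of 𝒫₁ are pairwise disjoint and ∑_{P∈𝒫₁} |P| ≤ ε|Q|. -/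
open MeasureTheory
open scoped ENNReal

noncomputable section

/-- A dyadic cube in `ι → ℝ`: a product of dyadic intervals `[2^m l, 2^m (l+1))`
of equal sidelength. -/
def IsDyadicCube {ι : Type*} [Fintype ι] (P : Set (ι → ℝ)) : Prop :=
  ∃ (m : ℤ) (l : ι → ℤ),
    P = Set.univ.pi fun i => Set.Ico ((2:ℝ) ^ m * (l i : ℝ)) ((2:ℝ) ^ m * ((l i : ℝ) + 1))

/-- A dyadic test function: a finite linear combination of indicators of dyadic cubes. -/
def IsDyadicTest {ι : Type*} [Fintype ι] (f : (ι → ℝ) → ℝ) : Prop :=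
  ∃ (N : ℕ) (c : Fin N → ℝ) (P : Fin N → Set (ι → ℝ)),
    (∀ i, IsDyadicCube (P i)) ∧
    f = fun x => ∑ i, c i * Set.indicator (P i) (fun _ => (1:ℝ)) x

/-- `P'` is a dyadic child of `P`: a dyadic subcube of half the sidelength. -/
def IsDyadicChild {ι : Type*} [Fintype ι] (P' P : Set (ι → ℝ)) : Prop :=
  IsDyadicCube P' ∧ IsDyadicCube P ∧ P' ⊆ P ∧
    volume P = 2 ^ (Fintype.card ι) * volume P'

/-- The `L^p` norm (valued in `ℝ≥0∞`). -/
def lpNorm {ι : Type*} [Fintype ι] (p : ℝ) (f : (ι → ℝ) → ℝ) : ℝ≥0∞ :=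
  eLpNorm f (ENNReal.ofReal p) volume

/-- The `L^p` norm (real-valued). -/
def lpNormR {ι : Type*} [Fintype ι] (p : ℝ) (f : (ι → ℝ) → ℝ) : ℝ :=
  (eLpNorm f (ENNReal.ofReal p) volume).toReal

/-- A Hölder tuple of exponents: `1 < p j < ∞` with `∑ 1/p j = 1`. -/
def IsHolderTuple {n : ℕ} (p : Fin n → ℝ) : Prop :=
  (∀ j, 1 < p j) ∧ ∑ j, 1 / p j = 1

/-- A perfect `n`-linear Calderón–Zygmund form on `ℝ^d`. -/
structure IsPerfectCZForm (d n : ℕ)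
    (Λ : MultilinearMap ℝ (fun _ : Fin n => (Fin d → ℝ) → ℝ) ℝ) : Prop where
  /-- Dyadic decay. -/
  decay : ∀ p : Fin n → ℝ, IsHolderTuple p →
    ∀ P : Set (Fin d → ℝ), IsDyadicCube P →
    ∀ f : Fin n → (Fin d → ℝ) → ℝ,
      (∀ j, IsDyadicTest (f j)) →
      (∀ j, Function.support (f j) ⊆ P) →
      (∃ i j : Fin n, i ≠ j ∧ ∃ Pi Pj : Set (Fin d → ℝ),
        IsDyadicChild Pi P ∧ IsDyadicChild Pj P ∧ Pi ≠ Pj ∧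
        Function.support (f i) ⊆ Pi ∧ Function.support (f j) ⊆ Pj) →
      ENNReal.ofReal |Λ f| ≤ ∏ j, lpNorm (p j) (f j)
  /-- Perfect smoothness. -/
  smooth : ∀ f : Fin n → (Fin d → ℝ) → ℝ, (∀ j, IsDyadicTest (f j)) →
    ∀ P : Set (Fin d → ℝ), IsDyadicCube P →
    ∀ i j : Fin n, i ≠ j →
      Function.support (f j) ⊆ P → (∫ x, f j x) = 0 →
      (∀ x ∈ P, f i x = 0) → Λ f = 0
  /-- Qualitative truncation: the kernel is a dyadic test function on `ℝ^{dn}`. -/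
  trunc : ∃ K : (Fin n × Fin d → ℝ) → ℝ, IsDyadicTest K ∧
    ∀ f : Fin n → (Fin d → ℝ) → ℝ, (∀ j, IsDyadicTest (f j)) →
      Λ f = ∫ x : Fin n × Fin d → ℝ, K x * ∏ j, f j (fun i => x (j, i))


lemma dyadic_interval_subset {m m' : ℤ} (hmm : m ≤ m') (l l' : ℤ) {x : ℝ}
    (hx : x ∈ Set.Ico ((2:ℝ)^m * (l:ℝ)) ((2:ℝ)^m * ((l:ℝ)+1)))
    (hx' : x ∈ Set.Ico ((2:ℝ)^m' * (l':ℝ)) ((2:ℝ)^m' * ((l':ℝ)+1))) :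
    Set.Ico ((2:ℝ)^m * (l:ℝ)) ((2:ℝ)^m * ((l:ℝ)+1)) ⊆
      Set.Ico ((2:ℝ)^m' * (l':ℝ)) ((2:ℝ)^m' * ((l':ℝ)+1)) := by
  have h2m : (0:ℝ) < (2:ℝ)^m := by positivity
  set e : ℕ := (m' - m).toNat with he
  have hm' : m' = m + (e : ℤ) := by
    have := Int.toNat_of_nonneg (by omega : (0:ℤ) ≤ m' - m)
    omega
  have hpow : (2:ℝ)^m' = (2:ℝ)^m * ((2^e : ℤ) : ℝ) := by
    rw [hm', zpow_add₀ (by norm_num : (2:ℝ) ≠ 0)]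
    push_cast
    rw [zpow_natCast]
  set K : ℤ := 2^e * l' with hK
  have hlow : (2:ℝ)^m' * (l':ℝ) = (2:ℝ)^m * (K:ℝ) := by
    rw [hpow, hK]; push_cast; ring
  have hhigh : (2:ℝ)^m' * ((l':ℝ)+1) = (2:ℝ)^m * ((K:ℝ) + ((2^e : ℤ):ℝ)) := by
    rw [hpow, hK]; push_cast; ring
  obtain ⟨ha1, ha2⟩ := hx
  obtain ⟨hb1, hb2⟩ := hx'
  rw [hlow] at hb1
  rw [hhigh] at hb2
  have hKl : (K:ℝ) ≤ (l:ℝ) := by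
    have h1 : (2:ℝ)^m * (K:ℝ) < (2:ℝ)^m * ((l:ℝ)+1) := lt_of_le_of_lt hb1 ha2
    have h2 : (K:ℝ) < (l:ℝ) + 1 := (mul_lt_mul_iff_right₀ h2m).mp h1
    have : K < l + 1 := by exact_mod_cast h2
    exact_mod_cast (by omega : K ≤ l)
  have hlK : (l:ℝ) + 1 ≤ (K:ℝ) + ((2^e : ℤ):ℝ) := by
    have h1 : (2:ℝ)^m * (l:ℝ) < (2:ℝ)^m * ((K:ℝ) + ((2^e:ℤ):ℝ)) := lt_of_le_of_lt ha1 hb2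
    have h2 : (l:ℝ) < (K:ℝ) + ((2^e:ℤ):ℝ) := (mul_lt_mul_iff_right₀ h2m).mp h1
    have h3 : l < K + 2^e := by exact_mod_cast h2
    have : l + 1 ≤ K + 2^e := by omega
    exact_mod_cast this
  intro y hy
  obtain ⟨hy1, hy2⟩ := hy
  constructor
  · rw [hlow]
    calc (2:ℝ)^m * (K:ℝ) ≤ (2:ℝ)^m * (l:ℝ) := by gcongr
    _ ≤ y := hy1
  · rw [hhigh]
    calc y < (2:ℝ)^m * ((l:ℝ)+1) := hy2
    _ ≤ (2:ℝ)^m * ((K:ℝ)+((2^e:ℤ):ℝ)) := by gcongr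

lemma dyadic_nested_or_disjoint {ι : Type*} [Fintype ι] {P P' : Set (ι → ℝ)}
    (hP : IsDyadicCube P) (hP' : IsDyadicCube P') :
    P ⊆ P' ∨ P' ⊆ P ∨ Disjoint P P' := by
  by_cases hdis : Disjoint P P'
  · exact Or.inr (Or.inr hdis)
  obtain ⟨x, hxP, hxP'⟩ := Set.not_disjoint_iff.mp hdis
  obtain ⟨m, l, rfl⟩ := hP
  obtain ⟨m', l', rfl⟩ := hP'
  rw [Set.mem_univ_pi] at hxP hxP'
  rcases le_total m m' with h | h
  · left
    intro y hy
    rw [Set.mem_univ_pi] at hy ⊢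
    intro i
    exact dyadic_interval_subset h (l i) (l' i) (hxP i) (hxP' i) (hy i)
  · right; left
    intro y hy
    rw [Set.mem_univ_pi] at hy ⊢
    intro i
    exact dyadic_interval_subset h (l' i) (l i) (hxP' i) (hxP i) (hy i)

lemma dyadic_props {ι : Type*} [Fintype ι] {P : Set (ι → ℝ)} (hP : IsDyadicCube P) :
    MeasurableSet P ∧ 0 < volume P ∧ volume P ≠ ⊤ := by
  obtain ⟨m, l, rfl⟩ := hP
  refine ⟨MeasurableSet.univ_pi fun i => measurableSet_Ico, ?_, ?_⟩
  all_goals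
    rw [volume_pi_pi]
    have h1 : ∀ i : ι, volume (Set.Ico ((2:ℝ)^m * (l i:ℝ)) ((2:ℝ)^m * ((l i:ℝ)+1)))
        = ENNReal.ofReal ((2:ℝ)^m) := by
      intro i; rw [Real.volume_Ico]; ring_nf
    simp only [h1, Finset.prod_const]
  · exact ENNReal.pow_pos (ENNReal.ofReal_pos.mpr (by positivity)) _
  · exact ENNReal.pow_ne_top ENNReal.ofReal_ne_top

lemma dyadic_countable {ι : Type*} [Fintype ι] :
    {P : Set (ι → ℝ) | IsDyadicCube P}.Countable := by
  have : {P : Set (ι → ℝ) | IsDyadicCube P} ⊆ Set.range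
      (fun q : ℤ × (ι → ℤ) =>
        Set.univ.pi fun i => Set.Ico ((2:ℝ) ^ q.1 * (q.2 i : ℝ)) ((2:ℝ) ^ q.1 * ((q.2 i : ℝ) + 1))) := by
    rintro P ⟨m, l, rfl⟩
    exact ⟨(m, l), rfl⟩
  exact (Set.countable_range _).mono this


/-- The stopping-time estimate for the collection `𝒫₁` of maximal dyadic cubes `P ⊆ Q`
on which some `f_j` has large `L^{p_j}` mass: the cubes are pairwise disjoint and their
total measure is at most `ε |Q|`. -/
theorem stopping_time_P1 (d n : ℕ) (hd : 1 ≤ d) (hn : 1 ≤ n)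
    (Q : Set (Fin d → ℝ)) (hQ : IsDyadicCube Q)
    (p : Fin n → ℝ) (hp : ∀ j, 1 < p j)
    (f : Fin n → (Fin d → ℝ) → ℝ)
    (hf : ∀ j, MemLp (f j) (ENNReal.ofReal (p j)) volume)
    (hfpos : ∀ j, eLpNorm (f j) (ENNReal.ofReal (p j)) volume ≠ 0)
    (ε : ℝ) (hε : 0 < ε)
    (P1 : Set (Set (Fin d → ℝ)))
    (hP1 : P1 = {P | IsDyadicCube P ∧ P ⊆ Q ∧
      (∃ j : Fin n,
        (n : ℝ) * ε⁻¹ * ((volume Q).toReal)⁻¹ * (∫ x, |f j x| ^ (p j)) ≤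
          ((volume P).toReal)⁻¹ * ∫ x in P, |f j x| ^ (p j)) ∧
      ∀ P' : Set (Fin d → ℝ), IsDyadicCube P' → P ⊂ P' → P' ⊆ Q →
        ¬ ∃ j : Fin n,
          (n : ℝ) * ε⁻¹ * ((volume Q).toReal)⁻¹ * (∫ x, |f j x| ^ (p j)) ≤
            ((volume P').toReal)⁻¹ * ∫ x in P', |f j x| ^ (p j)}) :
    (P1.Pairwise fun A B => Disjoint A B) ∧
    ∑' P : P1, volume (P : Set (Fin d → ℝ)) ≤ ENNReal.ofReal ε * volume Q := by
  have hmem : ∀ A ∈ P1, IsDyadicCube A ∧ A ⊆ Q ∧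
      (∃ j : Fin n,
        (n : ℝ) * ε⁻¹ * ((volume Q).toReal)⁻¹ * (∫ x, |f j x| ^ (p j)) ≤
          ((volume A).toReal)⁻¹ * ∫ x in A, |f j x| ^ (p j)) ∧
      ∀ P' : Set (Fin d → ℝ), IsDyadicCube P' → A ⊂ P' → P' ⊆ Q →
        ¬ ∃ j : Fin n,
          (n : ℝ) * ε⁻¹ * ((volume Q).toReal)⁻¹ * (∫ x, |f j x| ^ (p j)) ≤
            ((volume P').toReal)⁻¹ * ∫ x in P', |f j x| ^ (p j) := by
    intro A hA
    rw [hP1] at hA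
    exact hA
  -- Part 1: pairwise disjointness
  have hpair : P1.Pairwise fun A B => Disjoint A B := by
    intro A hA B hB hAB
    have hA' := hmem A hA
    have hB' := hmem B hB
    rcases dyadic_nested_or_disjoint hA'.1 hB'.1 with h | h | h
    · exact absurd hB'.2.2.1 (hA'.2.2.2 B hB'.1 (h.ssubset_of_ne hAB) hB'.2.1)
    · exact absurd hA'.2.2.1 (hB'.2.2.2 A hA'.1 (h.ssubset_of_ne (Ne.symm hAB)) hA'.2.1)
    · exact h
  refine ⟨hpair, ?_⟩
  -- Part 2
  have hn' : (0:ℝ) < (n:ℝ) := by exact_mod_cast hn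
  have hQm := dyadic_props hQ
  have hqr : 0 < (volume Q).toReal := ENNReal.toReal_pos hQm.2.1.ne' hQm.2.2
  have hpj0 : ∀ j, (0:ℝ) < p j := fun j => lt_trans one_pos (hp j)
  have hgnn : ∀ j x, (0:ℝ) ≤ |f j x| ^ p j :=
    fun j x => Real.rpow_nonneg (abs_nonneg _) _
  have hg_int : ∀ j, Integrable (fun x => |f j x| ^ p j) volume := by
    intro j
    have h := (hf j).integrable_norm_rpow
      (by simpa using (ENNReal.ofReal_pos.mpr (hpj0 j)).ne') ENNReal.ofReal_ne_top
    simpa [Real.norm_eq_abs, ENNReal.toReal_ofReal (hpj0 j).le] using h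
  have hI_pos : ∀ j, 0 < ∫ x, |f j x| ^ p j := by
    intro j
    have h0 : 0 ≤ ∫ x, |f j x| ^ p j := integral_nonneg (fun x => hgnn j x)
    rcases h0.lt_or_eq with h | h
    · exact h
    exfalso
    have hz := (integral_eq_zero_iff_of_nonneg (fun x => hgnn j x) (hg_int j)).mp h.symm
    have hfz : f j =ᵐ[volume] 0 := by
      filter_upwards [hz] with x hx
      have habs : |f j x| = 0 :=
        (Real.rpow_eq_zero (abs_nonneg _) (hpj0 j).ne').mp hx
      simpa [abs_eq_zero] using habs
    exact hfpos j (by rw [eLpNorm_congr_ae hfz, eLpNorm_zero])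
  -- key per-cube bound
  have key : ∀ A ∈ P1, volume A ≤
      ∑ j : Fin n, ENNReal.ofReal (ε / n * (volume Q).toReal * (∫ x, |f j x| ^ p j)⁻¹)
        * ∫⁻ x in A, ENNReal.ofReal (|f j x| ^ p j) := by
    intro A hA
    obtain ⟨hAd, _, ⟨j, hj⟩, _⟩ := hmem A hA
    have hAm := dyadic_props hAd
    have har : 0 < (volume A).toReal := ENNReal.toReal_pos hAm.2.1.ne' hAm.2.2
    have hS0 : (0:ℝ) ≤ ∫ x in A, |f j x| ^ p j := integral_nonneg (fun x => hgnn j x)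
    have hr : (volume A).toReal ≤
        ε / n * (volume Q).toReal * (∫ x, |f j x| ^ p j)⁻¹ * ∫ x in A, |f j x| ^ p j := by
      have hX : (0:ℝ) < (n:ℝ) * ε⁻¹ * ((volume Q).toReal)⁻¹ * ∫ x, |f j x| ^ p j := by
        have := hI_pos j
        positivity
      have h1 : (volume A).toReal * ((n:ℝ) * ε⁻¹ * ((volume Q).toReal)⁻¹ * ∫ x, |f j x| ^ p j)
          ≤ ∫ x in A, |f j x| ^ p j := by
        calc (volume A).toReal * ((n:ℝ) * ε⁻¹ * ((volume Q).toReal)⁻¹ * ∫ x, |f j x| ^ p j)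
            ≤ (volume A).toReal * (((volume A).toReal)⁻¹ * ∫ x in A, |f j x| ^ p j) := by
              exact mul_le_mul_of_nonneg_left hj har.le
        _ = ∫ x in A, |f j x| ^ p j := by field_simp
      calc (volume A).toReal
          ≤ (∫ x in A, |f j x| ^ p j) /
            ((n:ℝ) * ε⁻¹ * ((volume Q).toReal)⁻¹ * ∫ x, |f j x| ^ p j) :=
            (le_div_iff₀ hX).mpr h1
      _ = ε / n * (volume Q).toReal * (∫ x, |f j x| ^ p j)⁻¹ * ∫ x in A, |f j x| ^ p j := by
          field_simp
    calc volume A = ENNReal.ofReal (volume A).toReal := (ENNReal.ofReal_toReal hAm.2.2).symm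
    _ ≤ ENNReal.ofReal (ε / n * (volume Q).toReal * (∫ x, |f j x| ^ p j)⁻¹
          * ∫ x in A, |f j x| ^ p j) := ENNReal.ofReal_le_ofReal hr
    _ = ENNReal.ofReal (ε / n * (volume Q).toReal * (∫ x, |f j x| ^ p j)⁻¹)
          * ENNReal.ofReal (∫ x in A, |f j x| ^ p j) := by
        rw [ENNReal.ofReal_mul (by positivity)]
    _ = ENNReal.ofReal (ε / n * (volume Q).toReal * (∫ x, |f j x| ^ p j)⁻¹)
          * ∫⁻ x in A, ENNReal.ofReal (|f j x| ^ p j) := by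
        rw [ofReal_integral_eq_lintegral_ofReal ((hg_int j).restrict)
          (ae_of_all _ fun x => hgnn j x)]
    _ ≤ ∑ j' : Fin n, ENNReal.ofReal (ε / n * (volume Q).toReal * (∫ x, |f j' x| ^ p j')⁻¹)
          * ∫⁻ x in A, ENNReal.ofReal (|f j' x| ^ p j') :=
        Finset.single_le_sum (f := fun j' : Fin n =>
          ENNReal.ofReal (ε / n * (volume Q).toReal * (∫ x, |f j' x| ^ p j')⁻¹)
            * ∫⁻ x in A, ENNReal.ofReal (|f j' x| ^ p j'))
          (fun _ _ => zero_le) (Finset.mem_univ j)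
  have hcount : P1.Countable :=
    dyadic_countable.mono (fun P hP => (hmem P hP).1)
  haveI : Countable ↥P1 := hcount.to_subtype
  have hdisjsub : Pairwise (Function.onFun Disjoint fun P : ↥P1 => (P : Set (Fin d → ℝ))) := by
    intro a b hab
    exact hpair a.2 b.2 (Subtype.coe_injective.ne hab)
  have hmeas : ∀ P : ↥P1, MeasurableSet (P : Set (Fin d → ℝ)) :=
    fun P => (dyadic_props (hmem P P.2).1).1
  calc ∑' P : P1, volume (P : Set (Fin d → ℝ))
      ≤ ∑' P : P1, ∑ j : Fin n,
          ENNReal.ofReal (ε / n * (volume Q).toReal * (∫ x, |f j x| ^ p j)⁻¹)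
            * ∫⁻ x in (P : Set (Fin d → ℝ)), ENNReal.ofReal (|f j x| ^ p j) :=
        ENNReal.tsum_le_tsum (fun P => key P P.2)
  _ = ∑ j : Fin n, ∑' P : P1,
        ENNReal.ofReal (ε / n * (volume Q).toReal * (∫ x, |f j x| ^ p j)⁻¹)
          * ∫⁻ x in (P : Set (Fin d → ℝ)), ENNReal.ofReal (|f j x| ^ p j) :=
      Summable.tsum_finsetSum (fun j _ => ENNReal.summable)
  _ = ∑ j : Fin n, ENNReal.ofReal (ε / n * (volume Q).toReal * (∫ x, |f j x| ^ p j)⁻¹)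
        * ∑' P : P1, ∫⁻ x in (P : Set (Fin d → ℝ)), ENNReal.ofReal (|f j x| ^ p j) := by
      simp only [ENNReal.tsum_mul_left]
  _ ≤ ∑ j : Fin n, ENNReal.ofReal (ε / n * (volume Q).toReal * (∫ x, |f j x| ^ p j)⁻¹)
        * ENNReal.ofReal (∫ x, |f j x| ^ p j) := by
      apply Finset.sum_le_sum
      intro j _
      apply mul_le_mul_right
      have h1 : ∑' P : P1, ∫⁻ x in (P : Set (Fin d → ℝ)), ENNReal.ofReal (|f j x| ^ p j)
          = ∫⁻ x in ⋃ P : P1, (P : Set (Fin d → ℝ)), ENNReal.ofReal (|f j x| ^ p j) :=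
        (lintegral_iUnion hmeas hdisjsub _).symm
      rw [h1]
      calc ∫⁻ x in ⋃ P : P1, (P : Set (Fin d → ℝ)), ENNReal.ofReal (|f j x| ^ p j)
          ≤ ∫⁻ x in Set.univ, ENNReal.ofReal (|f j x| ^ p j) :=
            lintegral_mono_set (Set.subset_univ _)
      _ = ∫⁻ x, ENNReal.ofReal (|f j x| ^ p j) := by rw [Measure.restrict_univ]
      _ = ENNReal.ofReal (∫ x, |f j x| ^ p j) :=
        (ofReal_integral_eq_lintegral_ofReal (hg_int j) (ae_of_all _ fun x => hgnn j x)).symm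
  _ = ∑ _j : Fin n, ENNReal.ofReal (ε / n * (volume Q).toReal) := by
      apply Finset.sum_congr rfl
      intro j _
      rw [← ENNReal.ofReal_mul (by positivity)]
      congr 1
      field_simp [hn'.ne', (hI_pos j).ne']
  _ = ENNReal.ofReal ε * volume Q := by
      rw [Finset.sum_const, Finset.card_univ, Fintype.card_fin, nsmul_eq_mul,
        ← ENNReal.ofReal_natCast n, ← ENNReal.ofReal_mul (by positivity)]
      have h2 : (n:ℝ) * (ε / n * (volume Q).toReal) = ε * (volume Q).toReal := by
        field_simp
      rw [h2, ENNReal.ofReal_mul hε.le, ENNReal.ofReal_toReal hQm.2.2]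


end
end

section
/- Let d ≥ 1, let Q be a dyadic cube in ℝ^d, let 1 < r < ∞, let 0 < ε ≤ 1, and let K > 0. Let L be a linear functional defined on dyadic test functions supported on Q such that |L(ρ)| ≤ K‖ρ‖_r for every dyadic test function ρ supported on Q. Let 𝒫 be a collection of pairwise disjoint dyadic cubes contained in Q such that for each P ∈ 𝒫 there exists a nonzero dyadic test function ρ_P supported on P with ∫ ρ_P = 0 and |L(ρ_P)| ≥ K·ε^{−1}·(|P|/|Q|)^{1−1/r}·‖ρ_P‖_r. Then ∑_{P∈𝒫} |P| ≤ ε|Q|. -/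
open MeasureTheory
open scoped ENNReal

noncomputable section

namespace StoppingAux

open MeasureTheory
open scoped ENNReal

lemma floor_div_nat' (a : ℝ) (n : ℕ) (hn : 0 < n) : ⌊a / n⌋ = ⌊a⌋ / n := by
  have hn' : (0:ℝ) < n := Nat.cast_pos.mpr hn
  have hnz : (n:ℤ) ≠ 0 := by exact_mod_cast hn.ne'
  rw [Int.floor_eq_iff]
  constructor
  · rw [le_div_iff₀ hn']
    have h1 : (⌊a⌋ / (n:ℤ)) * n ≤ ⌊a⌋ := Int.ediv_mul_le ⌊a⌋ hnz
    calc ((⌊a⌋ / (n:ℤ) : ℤ) : ℝ) * n = (((⌊a⌋ / (n:ℤ)) * n : ℤ) : ℝ) := by push_cast; ring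
    _ ≤ (⌊a⌋ : ℝ) := by exact_mod_cast h1
    _ ≤ a := Int.floor_le a
  · rw [div_lt_iff₀ hn']
    have h1 : ⌊a⌋ < (⌊a⌋ / (n:ℤ) + 1) * n :=
      (Int.ediv_lt_iff_lt_mul (by exact_mod_cast hn)).mp (lt_add_one _)
    calc a < (⌊a⌋ : ℝ) + 1 := Int.lt_floor_add_one a
    _ ≤ (((⌊a⌋ / (n:ℤ) + 1) * n : ℤ) : ℝ) := by exact_mod_cast h1
    _ = (((⌊a⌋ / (n:ℤ) : ℤ) : ℝ) + 1) * n := by push_cast; ring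

lemma mem_Ico_iff_floor (x : ℝ) (m l : ℤ) :
    x ∈ Set.Ico ((2:ℝ) ^ m * (l : ℝ)) ((2:ℝ) ^ m * ((l : ℝ) + 1)) ↔ ⌊x / (2:ℝ) ^ m⌋ = l := by
  have h2 : (0:ℝ) < (2:ℝ) ^ m := zpow_pos (by norm_num) m
  rw [Int.floor_eq_iff, Set.mem_Ico]
  rw [le_div_iff₀ h2, div_lt_iff₀ h2]
  constructor <;> (intro ⟨h1', h2'⟩; constructor <;> nlinarith)

lemma floor_scale (x y : ℝ) (m m' : ℤ) (hmm : m ≤ m')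
    (h : ⌊x / (2:ℝ) ^ m⌋ = ⌊y / (2:ℝ) ^ m⌋) :
    ⌊x / (2:ℝ) ^ m'⌋ = ⌊y / (2:ℝ) ^ m'⌋ := by
  set n : ℕ := (m' - m).toNat with hn
  have hnn : (0:ℕ) < 2 ^ n := Nat.pow_pos (by norm_num)
  have key : ∀ z : ℝ, z / (2:ℝ) ^ m' = (z / (2:ℝ) ^ m) / ((2:ℕ) ^ n : ℕ) := by
    intro z
    have : ((2:ℝ)) ^ m' = (2:ℝ) ^ m * ((2:ℕ)^n : ℕ) := by
      push_cast
      rw [← zpow_natCast (2:ℝ) n, ← zpow_add₀ (two_ne_zero)]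
      congr 1
      omega
    rw [this]
    field_simp
  rw [key x, key y, floor_div_nat' _ _ hnn, floor_div_nat' _ _ hnn, h]

variable {ι : Type*} [Fintype ι]

lemma cube_volume_pos {P : Set (ι → ℝ)} (hP : IsDyadicCube P) :
    0 < volume P ∧ volume P < ⊤ := by
  obtain ⟨m, l, hl⟩ := hP
  have : volume P = (ENNReal.ofReal ((2:ℝ)^m)) ^ (Fintype.card ι) := by
    rw [hl, volume_pi_pi]
    have : ∀ i : ι, volume (Set.Ico ((2:ℝ) ^ m * (l i : ℝ)) ((2:ℝ) ^ m * ((l i : ℝ) + 1)))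
        = ENNReal.ofReal ((2:ℝ)^m) := by
      intro i; rw [Real.volume_Ico]; congr 1; ring
    simp only [this, Finset.prod_const, Finset.card_univ]
  rw [this]
  have h2 : (0:ℝ) < (2:ℝ)^m := zpow_pos (by norm_num) m
  exact ⟨ENNReal.pow_pos (ENNReal.ofReal_pos.mpr h2) _, ENNReal.pow_lt_top ENNReal.ofReal_lt_top⟩

lemma cube_measurableSet {P : Set (ι → ℝ)} (hP : IsDyadicCube P) : MeasurableSet P := by
  obtain ⟨m, l, hl⟩ := hP
  rw [hl]
  exact MeasurableSet.univ_pi fun i => measurableSet_Ico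

lemma test_measurable {f : (ι → ℝ) → ℝ} (hf : IsDyadicTest f) : Measurable f := by
  obtain ⟨N, c, P, hP, hfe⟩ := hf
  rw [hfe]
  exact Finset.measurable_sum _ fun i _ =>
    (measurable_const.indicator (cube_measurableSet (hP i))).const_mul _

lemma test_memℒp {f : (ι → ℝ) → ℝ} (hf : IsDyadicTest f) (p : ℝ≥0∞) :
    MemLp f p volume := by
  obtain ⟨N, c, P, hP, hfe⟩ := hf
  have : f = ∑ i : Fin N, (fun x => c i * Set.indicator (P i) (fun _ => (1:ℝ)) x) := by
    rw [hfe]; funext x; simp [Finset.sum_apply]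
  rw [this]
  apply memLp_finset_sum'
  intro i _
  have : (fun x => c i * Set.indicator (P i) (fun _ => (1:ℝ)) x)
      = Set.indicator (P i) (fun _ => c i) := by
    funext x
    by_cases h : x ∈ P i <;> simp [Set.indicator_of_mem, Set.indicator_of_notMem, h]
  rw [this]
  exact memLp_indicator_const p (cube_measurableSet (hP i)) _ (Or.inr (cube_volume_pos (hP i)).2.ne)

lemma test_locally_const {f : (ι → ℝ) → ℝ} (hf : IsDyadicTest f) (x : ι → ℝ) :
    ∃ C : Set (ι → ℝ), IsDyadicCube C ∧ x ∈ C ∧ ∀ y ∈ C, f y = f x := by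
  obtain ⟨N, c, P, hP, hfe⟩ := hf
  choose mi li hPe using fun i => hP i
  obtain ⟨m, hm⟩ : ∃ m : ℤ, ∀ i, m ≤ mi i := by
    rcases isEmpty_or_nonempty (Fin N) with h | h
    · exact ⟨0, fun i => absurd i.pos (by have := h.false i; exact fun _ => this.elim)⟩
    · exact ⟨Finset.univ.inf' (by simp [Finset.univ_nonempty]) mi, fun i =>
        Finset.inf'_le _ (Finset.mem_univ i)⟩
  refine ⟨Set.univ.pi fun j => Set.Ico ((2:ℝ) ^ m * ((⌊x j / (2:ℝ)^m⌋ : ℤ) : ℝ))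
      ((2:ℝ) ^ m * (((⌊x j / (2:ℝ)^m⌋ : ℤ) : ℝ) + 1)), ⟨m, _, rfl⟩, ?_, ?_⟩
  · intro j _
    exact (mem_Ico_iff_floor _ _ _).mpr rfl
  · intro y hy
    have hfl : ∀ j, ⌊y j / (2:ℝ)^m⌋ = ⌊x j / (2:ℝ)^m⌋ := fun j =>
      (mem_Ico_iff_floor _ _ _).mp (hy j (Set.mem_univ j))
    have hmem : ∀ i, y ∈ P i ↔ x ∈ P i := by
      intro i
      rw [hPe i]
      simp only [Set.mem_pi, Set.mem_univ, forall_true_left]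
      constructor <;> intro h j <;>
        [rw [mem_Ico_iff_floor, ← floor_scale (y j) (x j) m (mi i) (hm i) (hfl j)];
         rw [mem_Ico_iff_floor, floor_scale (y j) (x j) m (mi i) (hm i) (hfl j)]] <;>
        exact (mem_Ico_iff_floor _ _ _).mp (h j)
    rw [hfe]
    simp only
    apply Finset.sum_congr rfl
    intro i _
    congr 1
    by_cases h : x ∈ P i
    · rw [Set.indicator_of_mem h, Set.indicator_of_mem ((hmem i).mpr h)]
    · rw [Set.indicator_of_notMem h, Set.indicator_of_notMem (fun hc => h ((hmem i).mp hc))]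

lemma test_norm_pos {f : (ι → ℝ) → ℝ} (hf : IsDyadicTest f) (hf0 : f ≠ 0)
    {r : ℝ} (hr : 0 < r) : 0 < lpNormR r f := by
  have hmem := test_memℒp hf (ENNReal.ofReal r)
  have hp0 : (ENNReal.ofReal r) ≠ 0 := by simp [ENNReal.ofReal_eq_zero, not_le, hr]
  apply ENNReal.toReal_pos _ hmem.eLpNorm_ne_top
  intro h0
  have hae : f =ᵐ[volume] 0 :=
    (eLpNorm_eq_zero_iff (test_measurable hf).aestronglyMeasurable hp0).mp h0
  have hμ : volume {x | f x ≠ 0} = 0 := by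
    rw [Filter.EventuallyEq, ae_iff] at hae
    convert hae using 2
    rfl
  obtain ⟨x, hx⟩ := Function.ne_iff.mp hf0
  obtain ⟨C, hC, hxC, hCconst⟩ := test_locally_const hf x
  have hsub : C ⊆ {x | f x ≠ 0} := fun y hy => by
    simp only [Set.mem_setOf_eq, hCconst y hy]
    exact hx
  exact absurd (le_antisymm (hμ ▸ measure_mono hsub) (zero_le))
    (cube_volume_pos hC).1.ne'

lemma test_zero : IsDyadicTest (0 : (ι → ℝ) → ℝ) :=
  ⟨0, Fin.elim0, Fin.elim0, fun i => i.elim0, by funext x; simp⟩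

lemma test_smul {f : (ι → ℝ) → ℝ} (hf : IsDyadicTest f) (c : ℝ) : IsDyadicTest (c • f) := by
  obtain ⟨N, cf, P, hP, hfe⟩ := hf
  exact ⟨N, fun i => c * cf i, P, hP, by
    funext x; simp only [Pi.smul_apply, smul_eq_mul, hfe, Finset.mul_sum, mul_assoc]⟩

lemma test_add {f g : (ι → ℝ) → ℝ} (hf : IsDyadicTest f) (hg : IsDyadicTest g) :
    IsDyadicTest (f + g) := by
  obtain ⟨N₁, c₁, P₁, hP₁, hfe⟩ := hf
  obtain ⟨N₂, c₂, P₂, hP₂, hge⟩ := hg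
  refine ⟨N₁ + N₂, Fin.append c₁ c₂, Fin.append P₁ P₂, ?_, ?_⟩
  · intro i
    refine Fin.addCases (fun j => ?_) (fun j => ?_) i
    · rw [Fin.append_left]; exact hP₁ j
    · rw [Fin.append_right]; exact hP₂ j
  · funext x
    rw [Pi.add_apply, hfe, hge]
    simp only [Fin.sum_univ_add, Fin.append_left, Fin.append_right]

lemma test_finset_sum {α : Type*} (s : Finset α) (f : α → (ι → ℝ) → ℝ)
    (hf : ∀ a ∈ s, IsDyadicTest (f a)) : IsDyadicTest (∑ a ∈ s, f a) := by
  classical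
  induction s using Finset.induction_on with
  | empty => simpa using test_zero
  | insert _ _ hni ih =>
    rw [Finset.sum_insert hni]
    exact test_add (hf _ (Finset.mem_insert_self _ _))
      (ih fun a ha => hf a (Finset.mem_insert_of_mem ha))

lemma lpNormR_eq {f : (ι → ℝ) → ℝ} {r : ℝ} (hr : 0 < r)
    (hf : MemLp f (ENNReal.ofReal r) volume) :
    lpNormR r f = (∫ x, |f x| ^ r) ^ r⁻¹ := by
  have hp0 : (ENNReal.ofReal r) ≠ 0 := by simp [ENNReal.ofReal_eq_zero, not_le, hr]
  rw [lpNormR, hf.eLpNorm_eq_integral_rpow_norm hp0 ENNReal.ofReal_ne_top,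
    ENNReal.toReal_ofReal]
  · simp [ENNReal.toReal_ofReal hr.le, Real.norm_eq_abs]
  · apply Real.rpow_nonneg
    apply integral_nonneg
    intro x
    positivity

end StoppingAux

open StoppingAux in
/-- The stopping-time estimate corresponding to `Pc₃`: if a linear functional `L` is
bounded by `K ‖·‖_r` on dyadic test functions supported on `Q`, and `Pc` is a pairwise
disjoint collection of dyadic cubes `P ⊆ Q` each carrying a nonzero mean-zero test
function `ρ_P` with `|L ρ_P| ≥ K ε⁻¹ (|P|/|Q|)^{1-1/r} ‖ρ_P‖_r`, then
`∑_{P ∈ Pc} |P| ≤ ε |Q|`. -/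
theorem stopping_time_dual (d : ℕ) (hd : 1 ≤ d)
    (Q : Set (Fin d → ℝ)) (hQ : IsDyadicCube Q)
    (r : ℝ) (hr1 : 1 < r)
    (ε : ℝ) (hε0 : 0 < ε) (hε1 : ε ≤ 1)
    (K : ℝ) (hK : 0 < K)
    (L : ((Fin d → ℝ) → ℝ) →ₗ[ℝ] ℝ)
    (hL : ∀ ρ : (Fin d → ℝ) → ℝ, IsDyadicTest ρ → Function.support ρ ⊆ Q →
      |L ρ| ≤ K * lpNormR r ρ)
    (Pc : Set (Set (Fin d → ℝ)))
    (hPc_cube : ∀ P ∈ Pc, IsDyadicCube P ∧ P ⊆ Q)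
    (hPc_disj : Pc.Pairwise fun A B => Disjoint A B)
    (hPc_test : ∀ P ∈ Pc, ∃ ρ : (Fin d → ℝ) → ℝ, ρ ≠ 0 ∧ IsDyadicTest ρ ∧
      Function.support ρ ⊆ P ∧ (∫ x, ρ x) = 0 ∧
      K * ε⁻¹ * (((volume P).toReal / (volume Q).toReal) ^ (1 - 1 / r)) * lpNormR r ρ ≤
        |L ρ|) :
    ∑' P : Pc, volume (P : Set (Fin d → ℝ)) ≤ ENNReal.ofReal ε * volume Q := by
  classical
  have hr0 : (0:ℝ) < r := lt_trans one_pos hr1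
  have hrinv : (0:ℝ) < r⁻¹ := by positivity
  set t : ℝ := 1 - 1/r with ht_def
  have ht0 : 0 < t := by
    show (0:ℝ) < 1 - 1/r
    have : 1/r < 1 := by rw [div_lt_one hr0]; exact hr1
    linarith
  have ht1 : t ≤ 1 := by
    show (1:ℝ) - 1/r ≤ 1
    have : 0 < 1/r := by positivity
    linarith
  have htr : r⁻¹ + t = 1 := by show r⁻¹ + (1 - 1/r) = 1; rw [one_div]; ring
  have hQvol := cube_volume_pos hQ
  set vQ : ℝ := (volume Q).toReal with hvQ_def
  have hvQ : 0 < vQ := ENNReal.toReal_pos hQvol.1.ne' hQvol.2.ne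
  -- choose the test functions
  have hchoice : ∀ P : Set (Fin d → ℝ), ∃ ρ : (Fin d → ℝ) → ℝ, P ∈ Pc →
      (ρ ≠ 0 ∧ IsDyadicTest ρ ∧ Function.support ρ ⊆ P ∧ (∫ x, ρ x) = 0 ∧
      K * ε⁻¹ * (((volume P).toReal / (volume Q).toReal) ^ (1 - 1 / r)) * lpNormR r ρ ≤
        |L ρ|) := by
    intro P
    by_cases h : P ∈ Pc
    · obtain ⟨ρ, hρ⟩ := hPc_test P h
      exact ⟨ρ, fun _ => hρ⟩
    · exact ⟨0, fun h' => absurd h' h⟩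
  choose ρ hρ using hchoice
  -- reduce to finite subfamilies
  suffices hfin : ∀ F : Finset (Set (Fin d → ℝ)), ↑F ⊆ Pc →
      ∑ P ∈ F, volume P ≤ ENNReal.ofReal ε * volume Q by
    rw [ENNReal.tsum_eq_iSup_sum]
    apply iSup_le
    intro s
    rw [show ∑ p ∈ s, volume (p : Set (Fin d → ℝ))
        = ∑ P ∈ s.image Subtype.val, volume P from
      (Finset.sum_image (fun a _ b _ h => Subtype.val_injective h)).symm]
    apply hfin
    intro P hP
    simp only [Finset.coe_image, Set.mem_image, Finset.mem_coe] at hP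
    obtain ⟨⟨P', hP'⟩, _, rfl⟩ := hP
    exact hP'
  intro F hF
  -- notation
  set vP : Set (Fin d → ℝ) → ℝ := fun P => (volume P).toReal with hvP_def
  have hvPpos : ∀ P ∈ F, 0 < vP P := by
    intro P hP
    have h := cube_volume_pos (hPc_cube P (hF hP)).1
    exact ENNReal.toReal_pos h.1.ne' h.2.ne
  have hρne : ∀ P ∈ F, ρ P ≠ 0 := fun P hP => (hρ P (hF hP)).1
  have hρtest : ∀ P ∈ F, IsDyadicTest (ρ P) := fun P hP => (hρ P (hF hP)).2.1
  have hρsupp : ∀ P ∈ F, Function.support (ρ P) ⊆ P := fun P hP => (hρ P (hF hP)).2.2.1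
  have hρlow : ∀ P ∈ F,
      K * ε⁻¹ * ((vP P / vQ) ^ t) * lpNormR r (ρ P) ≤ |L (ρ P)| :=
    fun P hP => (hρ P (hF hP)).2.2.2.2
  have hρmem : ∀ P ∈ F, MemLp (ρ P) (ENNReal.ofReal r) volume :=
    fun P hP => test_memℒp (hρtest P hP) _
  set n : Set (Fin d → ℝ) → ℝ := fun P => lpNormR r (ρ P) with hn_def
  have hnpos : ∀ P ∈ F, 0 < n P := fun P hP => test_norm_pos (hρtest P hP) (hρne P hP) hr0
  set σ : Set (Fin d → ℝ) → ℝ := fun P => if L (ρ P) < 0 then -1 else 1 with hσ_def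
  have hσabs : ∀ P, |σ P| = 1 := by
    intro P
    show |if L (ρ P) < 0 then (-1:ℝ) else 1| = 1
    split_ifs <;> simp
  have hσL : ∀ P, σ P * L (ρ P) = |L (ρ P)| := by
    intro P
    show (if L (ρ P) < 0 then (-1:ℝ) else 1) * L (ρ P) = |L (ρ P)|
    split_ifs with h
    · rw [abs_of_neg h]; ring
    · rw [abs_of_nonneg (not_lt.mp h)]; ring
  set a : Set (Fin d → ℝ) → ℝ := fun P => vP P ^ r⁻¹ with ha_def
  have hapos : ∀ P ∈ F, 0 < a P := fun P hP => Real.rpow_pos_of_pos (hvPpos P hP) _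
  set co : Set (Fin d → ℝ) → ℝ := fun P => σ P * a P / n P with hco_def
  set g : (Fin d → ℝ) → ℝ := fun x => ∑ P ∈ F, co P * ρ P x with hg_def
  have hg_eq : g = ∑ P ∈ F, co P • ρ P := by
    funext x
    rw [hg_def]
    simp [Finset.sum_apply]
  have hg_test : IsDyadicTest g := by
    rw [hg_eq]
    exact test_finset_sum F _ fun P hP => test_smul (hρtest P hP) (co P)
  have hg_supp : Function.support g ⊆ Q := by
    intro x hx
    by_contra hxQ
    apply hx
    rw [hg_def]
    apply Finset.sum_eq_zero
    intro P hP
    have : ρ P x = 0 := by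
      by_contra hc
      exact hxQ ((hPc_cube P (hF hP)).2 (hρsupp P hP hc))
    rw [this, mul_zero]
  have hg_mem : MemLp g (ENNReal.ofReal r) volume := by
    rw [hg_eq]
    exact memLp_finset_sum' F fun P hP => ((hρmem P hP).const_smul (co P))
  set S : ℝ := ∑ P ∈ F, vP P with hS_def
  have hS0 : 0 ≤ S := Finset.sum_nonneg fun P hP => (hvPpos P hP).le
  -- pointwise disjoint-support identity
  have hptw : ∀ x, |g x| ^ r = ∑ P ∈ F, |co P * ρ P x| ^ r := by
    intro x
    by_cases hx : ∃ P₀ ∈ F, ρ P₀ x ≠ 0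
    · obtain ⟨P₀, hP₀F, hP₀x⟩ := hx
      have hz : ∀ P ∈ F, P ≠ P₀ → ρ P x = 0 := by
        intro P hPF hne
        by_contra hc
        exact (hPc_disj (hF hPF) (hF hP₀F) hne).le_bot
          ⟨hρsupp P hPF hc, hρsupp P₀ hP₀F hP₀x⟩
      have hgx : g x = co P₀ * ρ P₀ x := by
        rw [hg_def]
        exact Finset.sum_eq_single_of_mem P₀ hP₀F
          fun P hPF hne => by rw [hz P hPF hne, mul_zero]
      rw [hgx]
      symm
      apply Finset.sum_eq_single_of_mem P₀ hP₀F
      intro P hPF hne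
      rw [hz P hPF hne, mul_zero, abs_zero, Real.zero_rpow hr0.ne']
    · push_neg at hx
      have hgx : g x = 0 := by
        rw [hg_def]; exact Finset.sum_eq_zero fun P hP => by rw [hx P hP, mul_zero]
      rw [hgx, abs_zero, Real.zero_rpow hr0.ne']
      symm
      exact Finset.sum_eq_zero fun P hP => by
        rw [hx P hP, mul_zero, abs_zero, Real.zero_rpow hr0.ne']
  -- the r-th power integrals
  have hρint : ∀ P ∈ F, ∫ x, |ρ P x| ^ r = n P ^ r := by
    intro P hP
    have := lpNormR_eq hr0 (hρmem P hP)
    rw [hn_def]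
    simp only
    rw [this, Real.rpow_inv_rpow _ hr0.ne']
    exact integral_nonneg fun x => Real.rpow_nonneg (abs_nonneg _) r
  have hInt : ∫ x, |g x| ^ r = S := by
    have h1 : ∫ x, |g x| ^ r = ∑ P ∈ F, ∫ x, |co P * ρ P x| ^ r := by
      simp only [hptw]
      apply integral_finset_sum
      intro P hP
      have hmem : MemLp (fun x => co P * ρ P x) (ENNReal.ofReal r) volume :=
        (hρmem P hP).const_mul (co P)
      have := hmem.integrable_norm_rpow (by simp [ENNReal.ofReal_eq_zero, not_le, hr0])
        ENNReal.ofReal_ne_top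
      simp only [Real.norm_eq_abs, ENNReal.toReal_ofReal hr0.le, abs_mul] at this
      simpa [abs_mul] using this
    rw [h1, hS_def]
    apply Finset.sum_congr rfl
    intro P hP
    have h2 : ∀ x, |co P * ρ P x| ^ r = |co P| ^ r * |ρ P x| ^ r := by
      intro x
      rw [abs_mul, Real.mul_rpow (abs_nonneg _) (abs_nonneg _)]
    simp only [h2]
    rw [integral_const_mul, hρint P hP]
    have hcoabs : |co P| = a P / n P := by
      rw [hco_def]
      simp only
      rw [abs_div, abs_mul, hσabs, one_mul, abs_of_pos (hapos P hP), abs_of_pos (hnpos P hP)]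
    rw [hcoabs, Real.div_rpow (hapos P hP).le (hnpos P hP).le,
      div_mul_cancel₀ _ (Real.rpow_pos_of_pos (hnpos P hP) r).ne', ha_def]
    simp only
    rw [Real.rpow_inv_rpow (hvPpos P hP).le hr0.ne']
  have hgnorm : lpNormR r g = S ^ r⁻¹ := by
    rw [lpNormR_eq hr0 hg_mem, hInt]
  -- lower bound for L g
  have hLg : L g = ∑ P ∈ F, co P * L (ρ P) := by
    rw [hg_eq, map_sum]
    apply Finset.sum_congr rfl
    intro P _
    rw [LinearMap.map_smul, smul_eq_mul]
  have hlow : K * ε⁻¹ * S / vQ ^ t ≤ L g := by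
    rw [hLg]
    have : K * ε⁻¹ * S / vQ ^ t = ∑ P ∈ F, K * ε⁻¹ * vP P / vQ ^ t := by
      rw [hS_def, Finset.mul_sum, Finset.sum_div]
    rw [this]
    apply Finset.sum_le_sum
    intro P hP
    have hterm : co P * L (ρ P) = (a P / n P) * (σ P * L (ρ P)) := by
      rw [hco_def]; ring
    rw [hterm, hσL]
    have h3 : (a P / n P) * (K * ε⁻¹ * ((vP P / vQ) ^ t) * n P) = K * ε⁻¹ * vP P / vQ ^ t := by
      have ha' : a P * (vP P / vQ) ^ t = vP P / vQ ^ t := by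
        rw [Real.div_rpow (hvPpos P hP).le hvQ.le, ha_def]
        simp only
        rw [div_eq_mul_inv, ← mul_assoc, ← Real.rpow_add (hvPpos P hP), htr, Real.rpow_one,
          ← div_eq_mul_inv]
      have hn' : n P ≠ 0 := (hnpos P hP).ne'
      have h3' : (a P / n P) * (K * ε⁻¹ * ((vP P / vQ) ^ t) * n P)
          = K * ε⁻¹ * (a P * (vP P / vQ) ^ t) := by
        field_simp
      rw [h3', ha', mul_div_assoc]
    rw [← h3]
    apply mul_le_mul_of_nonneg_left (hρlow P hP)
    exact div_nonneg (hapos P hP).le (hnpos P hP).le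
  have hup : L g ≤ K * S ^ r⁻¹ := by
    calc L g ≤ |L g| := le_abs_self _
    _ ≤ K * lpNormR r g := hL g hg_test hg_supp
    _ = K * S ^ r⁻¹ := by rw [hgnorm]
  -- conclude the real inequality
  have hreal : S ≤ ε * vQ := by
    rcases eq_or_lt_of_le hS0 with hS | hSpos
    · rw [← hS]; positivity
    have key : K * ε⁻¹ * S / vQ ^ t ≤ K * S ^ r⁻¹ := le_trans hlow hup
    rw [show K * ε⁻¹ * S / vQ ^ t = K * (ε⁻¹ * S / vQ ^ t) by ring] at key
    have h1 : ε⁻¹ * S / vQ ^ t ≤ S ^ r⁻¹ := le_of_mul_le_mul_left key hK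
    have hvQt : 0 < vQ ^ t := Real.rpow_pos_of_pos hvQ t
    have h2 : S ≤ ε * S ^ r⁻¹ * vQ ^ t := by
      have := mul_le_mul_of_nonneg_left h1 (by positivity : (0:ℝ) ≤ ε * vQ ^ t)
      calc S = ε * vQ ^ t * (ε⁻¹ * S / vQ ^ t) := by field_simp
      _ ≤ ε * vQ ^ t * S ^ r⁻¹ := this
      _ = ε * S ^ r⁻¹ * vQ ^ t := by ring
    have hSsplit : S = S ^ r⁻¹ * S ^ t := by
      rw [← Real.rpow_add hSpos, htr, Real.rpow_one]
    have hSr : 0 < S ^ r⁻¹ := Real.rpow_pos_of_pos hSpos _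
    have h3 : S ^ t ≤ ε * vQ ^ t := by
      have := h2
      rw [hSsplit] at this
      nlinarith [this]
    have h4 : ε * vQ ^ t ≤ (ε * vQ) ^ t := by
      rw [Real.mul_rpow hε0.le hvQ.le]
      apply mul_le_mul_of_nonneg_right _ (Real.rpow_pos_of_pos hvQ t).le
      calc ε = ε ^ (1:ℝ) := (Real.rpow_one ε).symm
      _ ≤ ε ^ t := Real.rpow_le_rpow_of_exponent_ge hε0 hε1 ht1
    exact (Real.rpow_le_rpow_iff hS0 (by positivity) ht0).mp (le_trans h3 h4)
  -- back to ENNReal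
  have hsum : ∑ P ∈ F, volume P = ENNReal.ofReal S := by
    rw [hS_def, ENNReal.ofReal_sum_of_nonneg fun P hP => (hvPpos P hP).le]
    apply Finset.sum_congr rfl
    intro P hP
    exact (ENNReal.ofReal_toReal (cube_volume_pos (hPc_cube P (hF hP)).1).2.ne).symm
  rw [hsum, show volume Q = ENNReal.ofReal vQ from (ENNReal.ofReal_toReal hQvol.2.ne).symm,
    ← ENNReal.ofReal_mul hε0.le]
  exact ENNReal.ofReal_le_ofReal hreal

end
end

section
/- Let d ≥ 1, let Q be a dyadic cube in ℝ^d, let 1 < q < ∞ and B ≥ 1, and let u ∈ L^q(ℝ^d) be supported on Q with ∫ u = |Q| and ∫ |u|^q ≤ B|Q|. Let 𝒫 be any collection of pairwise disjoint dyadic cubes P contained in Q satisfying |[u]_P| ≤ 1/8 for each P ∈ 𝒫, and set E := Q \ ⋃_{P∈𝒫} P. Then |E| ≥ (7/8)^{q/(q−1)}·B^{−1/(q−1)}·|Q|; equivalently, ∑_{P∈𝒫} |P| ≤ (1 − (7/8)^{q/(q−1)}·B^{−1/(q−1)})·|Q|. -/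
open MeasureTheory
open scoped ENNReal

noncomputable section

lemma IsDyadicCube.measSet {ι : Type*} [Fintype ι] {P : Set (ι → ℝ)} (h : IsDyadicCube P) :
    MeasurableSet P := by
  obtain ⟨m, l, rfl⟩ := h
  exact MeasurableSet.univ_pi fun i => measurableSet_Ico

lemma IsDyadicCube.vol_eq {ι : Type*} [Fintype ι] {P : Set (ι → ℝ)} (h : IsDyadicCube P) :
    ∃ m : ℤ, volume P = (ENNReal.ofReal ((2:ℝ) ^ m)) ^ (Fintype.card ι) := by
  obtain ⟨m, l, rfl⟩ := h
  refine ⟨m, ?_⟩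
  rw [volume_pi_pi]
  have : ∀ i : ι, volume (Set.Ico ((2:ℝ) ^ m * (l i : ℝ)) ((2:ℝ) ^ m * ((l i : ℝ) + 1)))
      = ENNReal.ofReal ((2:ℝ) ^ m) := by
    intro i
    rw [Real.volume_Ico]
    congr 1
    ring
  simp only [this, Finset.prod_const, Finset.card_univ]

lemma IsDyadicCube.vol_pos {ι : Type*} [Fintype ι] {P : Set (ι → ℝ)} (h : IsDyadicCube P) :
    0 < volume P := by
  obtain ⟨m, hm⟩ := h.vol_eq
  rw [hm]
  exact ENNReal.pow_pos (ENNReal.ofReal_pos.2 (zpow_pos (by norm_num) m)) _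

lemma IsDyadicCube.vol_ne_top {ι : Type*} [Fintype ι] {P : Set (ι → ℝ)} (h : IsDyadicCube P) :
    volume P ≠ ∞ := by
  obtain ⟨m, hm⟩ := h.vol_eq
  rw [hm]
  exact ENNReal.pow_ne_top ENNReal.ofReal_ne_top

lemma countable_isDyadicCube (ι : Type*) [Fintype ι] :
    Set.Countable {P : Set (ι → ℝ) | IsDyadicCube P} := by
  have hsub : {P : Set (ι → ℝ) | IsDyadicCube P} ⊆ Set.range (fun p : ℤ × (ι → ℤ) =>
      Set.univ.pi fun i => Set.Ico ((2:ℝ) ^ p.1 * (p.2 i : ℝ)) ((2:ℝ) ^ p.1 * ((p.2 i : ℝ) + 1))) := by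
    rintro P ⟨m, l, rfl⟩
    exact ⟨(m, l), rfl⟩
  exact (Set.countable_range _).mono hsub


/-- The stopping-time estimate corresponding to `𝒫₄`: if `u ∈ L^q` is supported on the
dyadic cube `Q` with `∫ u = |Q|` and `∫ |u|^q ≤ B |Q|`, and `𝒫` is a pairwise disjoint
collection of dyadic cubes `P ⊆ Q` with `|[u]_P| ≤ 1/8`, then the complement `E` of
their union in `Q` satisfies `|E| ≥ (7/8)^{q/(q-1)} B^{-1/(q-1)} |Q|`; equivalently
`∑_{P∈𝒫} |P| ≤ (1 - (7/8)^{q/(q-1)} B^{-1/(q-1)}) |Q|`. -/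
theorem stopping_time_smallMean (d : ℕ) (hd : 1 ≤ d)
    (Q : Set (Fin d → ℝ)) (hQ : IsDyadicCube Q)
    (q B : ℝ) (hq : 1 < q) (hB : 1 ≤ B)
    (u : (Fin d → ℝ) → ℝ)
    (hu : MemLp u (ENNReal.ofReal q) volume)
    (husupp : Function.support u ⊆ Q)
    (humean : (∫ x, u x) = (volume Q).toReal)
    (hunorm : (∫ x, |u x| ^ q) ≤ B * (volume Q).toReal)
    (Pc : Set (Set (Fin d → ℝ)))
    (hPc : ∀ P ∈ Pc, IsDyadicCube P ∧ P ⊆ Q)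
    (hPcdisj : Pc.Pairwise fun A C => Disjoint A C)
    (hPcavg : ∀ P ∈ Pc, |((volume P).toReal)⁻¹ * ∫ x in P, u x| ≤ 1 / 8) :
    ENNReal.ofReal (((7:ℝ) / 8) ^ (q / (q - 1)) * B ^ (-(1 / (q - 1)))) * volume Q ≤
        volume (Q \ ⋃ P ∈ Pc, P) ∧
      ∑' P : Pc, volume (P : Set (Fin d → ℝ)) ≤
        ENNReal.ofReal (1 - ((7:ℝ) / 8) ^ (q / (q - 1)) * B ^ (-(1 / (q - 1)))) * volume Q := by
  classical
  have hQmeas : MeasurableSet Q := hQ.measSet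
  have hQfin : volume Q ≠ ∞ := hQ.vol_ne_top
  have hQpos : 0 < volume Q := hQ.vol_pos
  have hq0 : (0:ℝ) < q := by linarith
  have hq1' : (0:ℝ) < q - 1 := by linarith
  have hB0 : (0:ℝ) < B := by linarith
  set V : ℝ := (volume Q).toReal with hVdef
  have hV : 0 < V := ENNReal.toReal_pos hQpos.ne' hQfin
  -- the union
  set U : Set (Fin d → ℝ) := ⋃ P ∈ Pc, P with hUdef
  have hPccount : Pc.Countable :=
    (countable_isDyadicCube (Fin d)).mono (fun P hP => (hPc P hP).1)
  haveI : Countable ↥Pc := hPccount.to_subtype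
  have hUQ : U ⊆ Q := Set.iUnion₂_subset fun P hP => (hPc P hP).2
  have hUmeas : MeasurableSet U :=
    MeasurableSet.biUnion hPccount fun P hP => (hPc P hP).1.measSet
  have hUfin : volume U ≠ ∞ := (lt_of_le_of_lt (measure_mono hUQ) hQfin.lt_top).ne
  have hvolU : volume U = ∑' P : Pc, volume (P : Set (Fin d → ℝ)) := by
    rw [hUdef, ← Set.sUnion_eq_biUnion]
    exact measure_sUnion hPccount hPcdisj (fun P hP => (hPc P hP).1.measSet)
  -- integrability
  haveI : IsFiniteMeasure (volume.restrict Q) :=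
    ⟨by rw [Measure.restrict_apply_univ]; exact hQfin.lt_top⟩
  have hq1le : (1:ℝ≥0∞) ≤ ENNReal.ofReal q := by
    rw [← ENNReal.ofReal_one]
    exact ENNReal.ofReal_le_ofReal hq.le
  have hofq_ne0 : ENNReal.ofReal q ≠ 0 := (ENNReal.ofReal_pos.2 hq0).ne'
  have hofq_top : ENNReal.ofReal q ≠ ∞ := ENNReal.ofReal_ne_top
  have huindicator : Set.indicator Q u = u := Set.indicator_eq_self.2 husupp
  have huintQ : IntegrableOn u Q := (MemLp.mono_exponent (hu.restrict Q) hq1le).integrable le_rfl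
  have huglob : Integrable u := by
    rw [← huindicator]
    exact huintQ.integrable_indicator hQmeas
  have hintQ : (∫ x in Q, u x) = V := by
    rw [← integral_indicator hQmeas, huindicator, humean]
  -- sum of integrals over the cubes
  have hdisj' : Pairwise (Function.onFun Disjoint fun P : Pc => (P : Set (Fin d → ℝ))) := by
    intro A B hAB
    exact hPcdisj A.2 B.2 (Subtype.coe_injective.ne hAB)
  have hUiUnion : U = ⋃ P : Pc, (P : Set (Fin d → ℝ)) := by
    rw [hUdef, ← Set.sUnion_eq_biUnion, Set.sUnion_eq_iUnion]
  have hsum : HasSum (fun P : Pc => ∫ x in (P : Set (Fin d → ℝ)), u x) (∫ x in U, u x) := by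
    rw [hUiUnion]
    exact hasSum_integral_iUnion (fun P => (hPc P P.2).1.measSet) hdisj'
      (huglob.integrableOn)
  have hsumP : Summable (fun P : Pc => (volume (P : Set (Fin d → ℝ))).toReal) :=
    ENNReal.summable_toReal (by rw [← hvolU]; exact hUfin)
  have hsumVP : ∑' P : Pc, (volume (P : Set (Fin d → ℝ))).toReal ≤ V := by
    rw [← ENNReal.tsum_toReal_eq (fun P : Pc => (hPc P P.2).1.vol_ne_top), ← hvolU]
    exact ENNReal.toReal_mono hQfin (measure_mono hUQ)
  have hterm : ∀ P : Pc, (∫ x in (P : Set (Fin d → ℝ)), u x)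
      ≤ (1/8) * (volume (P : Set (Fin d → ℝ))).toReal := by
    intro P
    set v : ℝ := (volume (P : Set (Fin d → ℝ))).toReal with hvdef
    have hvpos : 0 < v := ENNReal.toReal_pos (hPc P P.2).1.vol_pos.ne' (hPc P P.2).1.vol_ne_top
    have h := hPcavg P P.2
    set I : ℝ := ∫ x in (P : Set (Fin d → ℝ)), u x with hIdef
    have habs : |I| = v * |v⁻¹ * I| := by
      rw [abs_mul, abs_inv, abs_of_pos hvpos]
      field_simp
    calc I ≤ |I| := le_abs_self _
      _ = v * |v⁻¹ * I| := habs
      _ ≤ v * (1/8) := mul_le_mul_of_nonneg_left h hvpos.le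
      _ = (1/8) * v := mul_comm _ _
  have hintU_le : (∫ x in U, u x) ≤ (1/8) * V := by
    rw [← hsum.tsum_eq]
    calc ∑' P : Pc, ∫ x in (P : Set (Fin d → ℝ)), u x
        ≤ ∑' P : Pc, (1/8) * (volume (P : Set (Fin d → ℝ))).toReal :=
          Summable.tsum_le_tsum hterm hsum.summable (hsumP.mul_left _)
      _ = (1/8) * ∑' P : Pc, (volume (P : Set (Fin d → ℝ))).toReal := tsum_mul_left
      _ ≤ (1/8) * V := by nlinarith [hsumVP]
  -- lower bound on the integral over E
  have hElow : (7/8) * V ≤ ∫ x in Q \ U, u x := by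
    rw [integral_diff hUmeas huintQ hUQ, hintQ]
    linarith [hintU_le]
  -- Hölder
  set e : ℝ := (volume (Q \ U)).toReal with hedef
  have hEfin : volume (Q \ U) ≠ ∞ :=
    (lt_of_le_of_lt (measure_mono Set.diff_subset) hQfin.lt_top).ne
  have h1q_lt : 1/q < 1 := by rw [div_lt_one hq0]; exact hq
  have hexp_nonneg : (0:ℝ) ≤ 1 - 1/q := by linarith
  have hA : ENNReal.ofReal (∫ x in Q \ U, u x) ≤ eLpNorm u 1 (volume.restrict (Q \ U)) := by
    have h1 : (∫ x in Q \ U, u x) ≤ ∫ x in Q \ U, ‖u x‖ := by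
      apply integral_mono (huglob.integrableOn) (huglob.norm.integrableOn)
      intro x
      exact le_abs_self _
    calc ENNReal.ofReal (∫ x in Q \ U, u x) ≤ ENNReal.ofReal (∫ x in Q \ U, ‖u x‖) :=
          ENNReal.ofReal_le_ofReal h1
      _ = ∫⁻ x in Q \ U, ‖u x‖ₑ ∂volume :=
          ofReal_integral_norm_eq_lintegral_enorm huglob.integrableOn
      _ = eLpNorm u 1 (volume.restrict (Q \ U)) := eLpNorm_one_eq_lintegral_enorm.symm
  have hB' : eLpNorm u 1 (volume.restrict (Q \ U))
      ≤ eLpNorm u (ENNReal.ofReal q) (volume.restrict (Q \ U)) * volume (Q \ U) ^ (1 - 1/q) := by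
    have h := eLpNorm_le_eLpNorm_mul_rpow_measure_univ (μ := volume.restrict (Q \ U))
      hq1le (hu.1.restrict)
    rwa [Measure.restrict_apply_univ, ENNReal.toReal_one, ENNReal.toReal_ofReal hq0.le,
      one_div_one] at h
  have hC : eLpNorm u (ENNReal.ofReal q) volume ≤ ENNReal.ofReal (B * V) ^ (1/q) := by
    rw [eLpNorm_eq_lintegral_rpow_enorm_toReal hofq_ne0 hofq_top, ENNReal.toReal_ofReal hq0.le]
    apply ENNReal.rpow_le_rpow _ (by positivity : (0:ℝ) ≤ 1/q)
    have hint : Integrable (fun x => |u x| ^ q) volume := by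
      have h := hu.integrable_norm_rpow hofq_ne0 hofq_top
      simpa [Real.norm_eq_abs, ENNReal.toReal_ofReal hq0.le] using h
    have heq : ∀ x, ‖u x‖ₑ ^ q = ENNReal.ofReal (|u x| ^ q) := by
      intro x
      rw [← ofReal_norm, ENNReal.ofReal_rpow_of_nonneg (norm_nonneg _) hq0.le,
        Real.norm_eq_abs]
    simp only [heq]
    rw [← ofReal_integral_eq_lintegral_ofReal hint
      (Filter.Eventually.of_forall fun x => by positivity)]
    exact ENNReal.ofReal_le_ofReal hunorm
  have hENN : ENNReal.ofReal ((7/8) * V)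
      ≤ ENNReal.ofReal (B * V) ^ (1/q) * volume (Q \ U) ^ (1 - 1/q) := by
    calc ENNReal.ofReal ((7/8) * V) ≤ ENNReal.ofReal (∫ x in Q \ U, u x) :=
          ENNReal.ofReal_le_ofReal hElow
      _ ≤ eLpNorm u 1 (volume.restrict (Q \ U)) := hA
      _ ≤ eLpNorm u (ENNReal.ofReal q) (volume.restrict (Q \ U)) * volume (Q \ U) ^ (1 - 1/q) := hB'
      _ ≤ ENNReal.ofReal (B * V) ^ (1/q) * volume (Q \ U) ^ (1 - 1/q) := by
          gcongr
          exact le_trans (eLpNorm_mono_measure u Measure.restrict_le_self) hC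
  have hRHSne : ENNReal.ofReal (B * V) ^ (1/q) * volume (Q \ U) ^ (1 - 1/q) ≠ ∞ :=
    ENNReal.mul_ne_top (ENNReal.rpow_ne_top_of_nonneg (by positivity) ENNReal.ofReal_ne_top)
      (ENNReal.rpow_ne_top_of_nonneg hexp_nonneg hEfin)
  have hreal : (7/8) * V ≤ (B * V) ^ (1/q) * e ^ (1 - 1/q) := by
    have h := ENNReal.toReal_mono hRHSne hENN
    rwa [ENNReal.toReal_ofReal (by positivity), ENNReal.toReal_mul, ← ENNReal.toReal_rpow,
      ← ENNReal.toReal_rpow, ENNReal.toReal_ofReal (by positivity)] at h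
  have he0 : 0 < e := by
    by_contra hcon
    have he : e = 0 := le_antisymm (not_lt.1 hcon) ENNReal.toReal_nonneg
    rw [he, Real.zero_rpow (by linarith : 1 - 1/q ≠ 0), mul_zero] at hreal
    nlinarith
  -- algebra
  have hqne : q ≠ 0 := hq0.ne'
  have hq1ne : q - 1 ≠ 0 := hq1'.ne'
  have htpos : (0:ℝ) < q / (q - 1) := div_pos hq0 hq1'
  have key : ((7:ℝ)/8) ^ (q/(q-1)) * (V ^ ((1:ℝ)/(q-1)) * V)
      ≤ B ^ ((1:ℝ)/(q-1)) * V ^ ((1:ℝ)/(q-1)) * e := by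
    have h5 := Real.rpow_le_rpow (by positivity) hreal htpos.le
    rw [Real.mul_rpow (by norm_num) hV.le,
      Real.mul_rpow (Real.rpow_nonneg (by positivity) _) (Real.rpow_nonneg ENNReal.toReal_nonneg _)] at h5
    rw [← Real.rpow_mul (by positivity : (0:ℝ) ≤ B * V),
      ← Real.rpow_mul ENNReal.toReal_nonneg] at h5
    rw [(show 1/q * (q/(q-1)) = 1/(q-1) by field_simp),
      (show (1 - 1/q) * (q/(q-1)) = 1 by field_simp)] at h5
    rw [Real.rpow_one, Real.mul_rpow hB0.le hV.le] at h5
    have hVt : V ^ (q/(q-1)) = V ^ ((1:ℝ)/(q-1)) * V := by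
      rw [show q/(q-1) = 1/(q-1) + 1 by field_simp; ring,
        Real.rpow_add hV, Real.rpow_one]
    rw [hVt] at h5
    linarith [h5]
  have hVs : (0:ℝ) < V ^ ((1:ℝ)/(q-1)) := Real.rpow_pos_of_pos hV _
  have hBs : (0:ℝ) < B ^ ((1:ℝ)/(q-1)) := Real.rpow_pos_of_pos hB0 _
  have hfinal : ((7:ℝ)/8) ^ (q/(q-1)) * B ^ (-(1/(q-1))) * V ≤ e := by
    rw [Real.rpow_neg hB0.le]
    rw [mul_comm (((7:ℝ)/8) ^ (q/(q-1))) (B ^ ((1:ℝ)/(q-1)))⁻¹, mul_assoc,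
      inv_mul_le_iff₀ hBs]
    have h6 : (((7:ℝ)/8) ^ (q/(q-1)) * V) * V ^ ((1:ℝ)/(q-1))
        ≤ (B ^ ((1:ℝ)/(q-1)) * e) * V ^ ((1:ℝ)/(q-1)) := by nlinarith [key]
    exact le_of_mul_le_mul_right h6 hVs
  -- conclude
  have hc0 : (0:ℝ) ≤ ((7:ℝ)/8) ^ (q/(q-1)) * B ^ (-(1/(q-1))) := by positivity
  have hgoal1 : ENNReal.ofReal (((7:ℝ)/8) ^ (q/(q-1)) * B ^ (-(1/(q-1)))) * volume Q
      ≤ volume (Q \ U) := by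
    have h7 : ENNReal.ofReal ((((7:ℝ)/8) ^ (q/(q-1)) * B ^ (-(1/(q-1)))) * V)
        ≤ ENNReal.ofReal e := ENNReal.ofReal_le_ofReal hfinal
    rwa [ENNReal.ofReal_mul hc0, hVdef, ENNReal.ofReal_toReal hQfin, hedef,
      ENNReal.ofReal_toReal hEfin] at h7
  refine ⟨hgoal1, ?_⟩
  rw [← hvolU]
  have hvolU_eq : volume U = volume Q - volume (Q \ U) := by
    rw [measure_diff hUQ hUmeas.nullMeasurableSet hUfin, ENNReal.sub_sub_cancel hQfin
      (measure_mono hUQ)]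
  rw [hvolU_eq, ENNReal.ofReal_sub _ hc0, ENNReal.ofReal_one,
    ENNReal.sub_mul (fun _ _ => hQfin), one_mul]
  exact tsub_le_tsub_left hgoal1 _


end
end

section
/- Let d ≥ 1, let Q be a dyadic cube in ℝ^d, let 𝒫₄ be a collection of pairwise disjoint dyadic cubes contained in Q, and let M > 0. Let 𝒫₅ be the collection of maximal dyadic cubes S contained in Q which are contained in at least M distinct dyadic cubes, each of which is the parent of some cube in 𝒫₄. Then ∑_{S∈𝒫₅} |S| ≤ (2^d/M)·|Q|. In particular, if M = 2^d·ε^{−1} for some ε > 0, then ∑_{S∈𝒫₅} |S| ≤ ε|Q|. -/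
open MeasureTheory
open scoped ENNReal

noncomputable section

/-- `S` is contained in at least `M` distinct dyadic cubes, each of which is the parent
of some cube in the collection `P4`. -/
def ManyParents (d : ℕ) (P4 : Set (Set (Fin d → ℝ))) (M : ℝ) (S : Set (Fin d → ℝ)) : Prop :=
  ∃ 𝒯 : Finset (Set (Fin d → ℝ)), M ≤ (𝒯.card : ℝ) ∧
    ∀ T ∈ 𝒯, IsDyadicCube T ∧ S ⊆ T ∧ ∃ P ∈ P4, IsDyadicChild P T

lemma dyadic_measurable {d : ℕ} {P : Set (Fin d → ℝ)} (h : IsDyadicCube P) :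
    MeasurableSet P := by
  obtain ⟨m, l, rfl⟩ := h
  exact MeasurableSet.univ_pi fun i => measurableSet_Ico

lemma dyadic_nonempty {d : ℕ} {P : Set (Fin d → ℝ)} (h : IsDyadicCube P) : P.Nonempty := by
  obtain ⟨m, l, rfl⟩ := h
  refine ⟨fun i => (2:ℝ)^m * l i, fun i _ => ?_⟩
  have h2 : (0:ℝ) < 2^m := by positivity
  constructor
  · exact le_refl _
  · have := mul_lt_mul_of_pos_left (lt_add_one (l i : ℝ)) h2
    simpa using this

lemma dyadic_volume {d : ℕ} (m : ℤ) (l : Fin d → ℤ) :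
    volume (Set.univ.pi fun i => Set.Ico ((2:ℝ)^m * (l i : ℝ)) ((2:ℝ)^m * ((l i : ℝ) + 1)))
      = ENNReal.ofReal ((2:ℝ)^m) ^ d := by
  rw [volume_pi_pi]
  have : ∀ i : Fin d, volume (Set.Ico ((2:ℝ)^m * (l i : ℝ)) ((2:ℝ)^m * ((l i : ℝ) + 1)))
      = ENNReal.ofReal ((2:ℝ)^m) := by
    intro i
    rw [Real.volume_Ico]
    congr 1
    ring
  simp only [this, Finset.prod_const, Finset.card_univ, Fintype.card_fin]

lemma dyadic_Ico_subset {m m' : ℤ} (hm : m ≤ m') (l l' : ℤ) (x : ℝ)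
    (h1 : x ∈ Set.Ico ((2:ℝ)^m * (l:ℝ)) ((2:ℝ)^m * ((l:ℝ)+1)))
    (h2 : x ∈ Set.Ico ((2:ℝ)^m' * (l':ℝ)) ((2:ℝ)^m' * ((l':ℝ)+1))) :
    Set.Ico ((2:ℝ)^m * (l:ℝ)) ((2:ℝ)^m * ((l:ℝ)+1)) ⊆
      Set.Ico ((2:ℝ)^m' * (l':ℝ)) ((2:ℝ)^m' * ((l':ℝ)+1)) := by
  set K : ℤ := 2 ^ (m' - m).toNat with hKdef
  have htn : ((m' - m).toNat : ℤ) = m' - m := Int.toNat_of_nonneg (by omega)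
  have hK : (2:ℝ)^m' = (2:ℝ)^m * (K:ℝ) := by
    have : (K:ℝ) = (2:ℝ) ^ ((m' - m).toNat : ℤ) := by
      rw [hKdef]; push_cast; rw [zpow_natCast]
    rw [this, htn, ← zpow_add₀ (by norm_num : (2:ℝ) ≠ 0)]
    ring_nf
  have h2pos : (0:ℝ) < 2^m := by positivity
  obtain ⟨ha1, ha2⟩ := h1
  obtain ⟨hb1, hb2⟩ := h2
  rw [hK] at hb1 hb2
  have key1 : K * l' ≤ l := by
    have : (2:ℝ)^m * ((K:ℝ) * l') < (2:ℝ)^m * ((l:ℝ) + 1) := by nlinarith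
    have := (mul_lt_mul_iff_right₀ h2pos).mp this
    have : (K * l' : ℤ) < l + 1 := by exact_mod_cast this
    omega
  have key2 : l + 1 ≤ K * (l' + 1) := by
    have : (2:ℝ)^m * (l:ℝ) < (2:ℝ)^m * ((K:ℝ) * ((l':ℝ)+1)) := by nlinarith
    have := (mul_lt_mul_iff_right₀ h2pos).mp this
    have : (l:ℤ) < K * (l' + 1) := by exact_mod_cast this
    omega
  intro y hy
  obtain ⟨hy1, hy2⟩ := hy
  rw [hK]
  constructor
  · have : ((K * l' : ℤ) : ℝ) ≤ (l:ℝ) := by exact_mod_cast key1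
    push_cast at this
    nlinarith
  · have : ((l + 1 : ℤ) : ℝ) ≤ ((K * (l' + 1) : ℤ) : ℝ) := by exact_mod_cast key2
    push_cast at this
    nlinarith

lemma dyadic_trichotomy {d : ℕ} {P P' : Set (Fin d → ℝ)}
    (h : IsDyadicCube P) (h' : IsDyadicCube P') :
    P ⊆ P' ∨ P' ⊆ P ∨ Disjoint P P' := by
  by_cases hdisj : Disjoint P P'
  · exact Or.inr (Or.inr hdisj)
  obtain ⟨x, hxP, hxP'⟩ := Set.not_disjoint_iff.mp hdisj
  obtain ⟨m, l, rfl⟩ := h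
  obtain ⟨m', l', rfl⟩ := h'
  rcases le_total m m' with hm | hm
  · left
    apply Set.pi_mono
    intro i _
    exact dyadic_Ico_subset hm (l i) (l' i) (x i) (hxP i trivial) (hxP' i trivial)
  · right; left
    apply Set.pi_mono
    intro i _
    exact dyadic_Ico_subset hm (l' i) (l i) (x i) (hxP' i trivial) (hxP i trivial)

lemma Ico_same_len {a b h : ℝ} (hh : 0 < h)
    (hs : Set.Ico a (a + h) ⊆ Set.Ico b (b + h)) : a = b := by
  rw [Set.Ico_subset_Ico_iff (by linarith)] at hs
  linarith [hs.1, hs.2]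

lemma dyadic_eq_of_subset_volume_eq {d : ℕ} (hd : 1 ≤ d) {P P' : Set (Fin d → ℝ)}
    (h : IsDyadicCube P) (h' : IsDyadicCube P') (hss : P ⊆ P')
    (hvol : volume P = volume P') : P = P' := by
  obtain ⟨m, l, rfl⟩ := h
  obtain ⟨m', l', rfl⟩ := h'
  rw [dyadic_volume, dyadic_volume, ← ENNReal.ofReal_pow (by positivity),
    ← ENNReal.ofReal_pow (by positivity), ENNReal.ofReal_eq_ofReal_iff (by positivity) (by positivity)] at hvol
  have hside : (2:ℝ)^m = (2:ℝ)^m' := by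
    refine (pow_left_strictMonoOn₀ (M₀ := ℝ) (by omega : d ≠ 0)).injOn ?_ ?_ hvol
    · exact Set.mem_setOf_eq ▸ by positivity
    · exact Set.mem_setOf_eq ▸ by positivity
  have hne : (Set.univ.pi fun i => Set.Ico ((2:ℝ)^m * (l i : ℝ)) ((2:ℝ)^m * ((l i : ℝ)+1))).Nonempty :=
    dyadic_nonempty ⟨m, l, rfl⟩
  obtain ⟨x, hx⟩ := hne
  have hcoord : ∀ i, (2:ℝ)^m * (l i : ℝ) = (2:ℝ)^m' * (l' i : ℝ) := by
    intro i
    have hsub : Set.Ico ((2:ℝ)^m * (l i : ℝ)) ((2:ℝ)^m * ((l i : ℝ)+1)) ⊆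
        Set.Ico ((2:ℝ)^m' * (l' i : ℝ)) ((2:ℝ)^m' * ((l' i : ℝ)+1)) := by
      intro y hy
      have : Function.update x i y ∈ Set.univ.pi fun j =>
          Set.Ico ((2:ℝ)^m * (l j : ℝ)) ((2:ℝ)^m * ((l j : ℝ)+1)) := by
        intro j _
        rcases eq_or_ne j i with rfl | hji
        · simpa using hy
        · simp only [Function.update_of_ne hji]
          exact hx j trivial
      have := hss this i trivial
      simpa using this
    have hh : (0:ℝ) < (2:ℝ)^m := by positivity
    have e1 : (2:ℝ)^m * ((l i : ℝ)+1) = (2:ℝ)^m * (l i : ℝ) + (2:ℝ)^m := by ring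
    have e2 : (2:ℝ)^m' * ((l' i : ℝ)+1) = (2:ℝ)^m' * (l' i : ℝ) + (2:ℝ)^m := by
      rw [← hside]; ring
    rw [e1, e2] at hsub
    exact Ico_same_len hh hsub
  have : ∀ i, Set.Ico ((2:ℝ)^m * (l i : ℝ)) ((2:ℝ)^m * ((l i : ℝ)+1)) =
      Set.Ico ((2:ℝ)^m' * (l' i : ℝ)) ((2:ℝ)^m' * ((l' i : ℝ)+1)) := by
    intro i
    rw [mul_add, mul_add, mul_one, mul_one, hcoord i, hside]
  exact Set.pi_congr rfl fun i _ => this i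

lemma dyadic_parent_unique {d : ℕ} (hd : 1 ≤ d) {P T T' : Set (Fin d → ℝ)}
    (h : IsDyadicChild P T) (h' : IsDyadicChild P T') : T = T' := by
  obtain ⟨hP, hT, hPT, hvT⟩ := h
  obtain ⟨-, hT', hPT', hvT'⟩ := h'
  have hvol : volume T = volume T' := hvT.trans hvT'.symm
  obtain ⟨x, hx⟩ := dyadic_nonempty hP
  have hnd : ¬ Disjoint T T' := Set.not_disjoint_iff.mpr ⟨x, hPT hx, hPT' hx⟩
  rcases dyadic_trichotomy hT hT' with hss | hss | hdisj
  · exact dyadic_eq_of_subset_volume_eq hd hT hT' hss hvol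
  · exact (dyadic_eq_of_subset_volume_eq hd hT' hT hss hvol.symm).symm
  · exact absurd hdisj hnd

lemma dyadic_countable_s7 (d : ℕ) : {P : Set (Fin d → ℝ) | IsDyadicCube P}.Countable := by
  have hsub : {P : Set (Fin d → ℝ) | IsDyadicCube P} ⊆ Set.range
      (fun p : ℤ × (Fin d → ℤ) =>
        Set.univ.pi fun i => Set.Ico ((2:ℝ)^p.1 * (p.2 i : ℝ)) ((2:ℝ)^p.1 * ((p.2 i : ℝ) + 1))) := by
    rintro P ⟨m, l, rfl⟩
    exact ⟨(m, l), rfl⟩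
  exact (Set.countable_range _).mono hsub

lemma dyadic_vol_pos {d : ℕ} {P : Set (Fin d → ℝ)} (h : IsDyadicCube P) :
    0 < volume P := by
  obtain ⟨m, l, rfl⟩ := h
  rw [dyadic_volume]
  have : 0 < ENNReal.ofReal ((2:ℝ)^m) := by
    rw [ENNReal.ofReal_pos]; positivity
  positivity

/-- The stopping-time estimate corresponding to `𝒫₅`: if `𝒫₄` is a pairwise disjoint
collection of dyadic cubes in `Q`, and `𝒫₅` is the collection of maximal dyadic cubes
`S ⊆ Q` contained in at least `M` distinct dyadic cubes which are parents of cubes in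
`𝒫₄`, then `∑_{S∈𝒫₅} |S| ≤ (2^d/M) |Q|`; in particular, if `M = 2^d ε⁻¹` then
`∑_{S∈𝒫₅} |S| ≤ ε |Q|`. -/
theorem stopping_time_manyParents (d : ℕ) (hd : 1 ≤ d)
    (Q : Set (Fin d → ℝ)) (hQ : IsDyadicCube Q)
    (P4 : Set (Set (Fin d → ℝ)))
    (hP4 : ∀ P ∈ P4, IsDyadicCube P ∧ P ⊆ Q)
    (hP4disj : P4.Pairwise fun A C => Disjoint A C)
    (M : ℝ) (hM : 0 < M)
    (P5 : Set (Set (Fin d → ℝ)))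
    (hP5 : P5 = {S | IsDyadicCube S ∧ S ⊆ Q ∧ ManyParents d P4 M S ∧
      ∀ S' : Set (Fin d → ℝ), IsDyadicCube S' → S ⊂ S' → S' ⊆ Q →
        ¬ ManyParents d P4 M S'}) :
    (∑' S : P5, volume (S : Set (Fin d → ℝ)) ≤
        ENNReal.ofReal ((2 ^ d : ℝ) / M) * volume Q) ∧
      ∀ ε : ℝ, 0 < ε → M = 2 ^ d * ε⁻¹ →
        ∑' S : P5, volume (S : Set (Fin d → ℝ)) ≤ ENNReal.ofReal ε * volume Q := by
  classical
  have hP5mem : ∀ S ∈ P5, IsDyadicCube S ∧ S ⊆ Q ∧ ManyParents d P4 M S ∧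
      ∀ S' : Set (Fin d → ℝ), IsDyadicCube S' → S ⊂ S' → S' ⊆ Q →
        ¬ ManyParents d P4 M S' := by
    rw [hP5]; exact fun S hS => hS
  have hP5disj : ∀ S ∈ P5, ∀ S' ∈ P5, S ≠ S' → Disjoint S S' := by
    intro S hS S' hS' hne
    obtain ⟨hSd, hSQ, hSM, hSmax⟩ := hP5mem S hS
    obtain ⟨hS'd, hS'Q, hS'M, hS'max⟩ := hP5mem S' hS'
    rcases dyadic_trichotomy hSd hS'd with hss | hss | hdisj
    · exact absurd hS'M (hSmax S' hS'd (hss.ssubset_of_ne hne) hS'Q)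
    · exact absurd hSM (hS'max S hSd (hss.ssubset_of_ne hne.symm) hSQ)
    · exact hdisj
  have hP5c : P5.Countable := (dyadic_countable_s7 d).mono fun S hS => (hP5mem S hS).1
  haveI := hP5c.to_subtype
  set 𝒯 : Set (Set (Fin d → ℝ)) :=
    {T | (∃ P ∈ P4, IsDyadicChild P T) ∧ ∃ S ∈ P5, S ⊆ T} with h𝒯def
  have h𝒯c : 𝒯.Countable := (dyadic_countable_s7 d).mono fun T hT => hT.1.choose_spec.2.2.1
  haveI := h𝒯c.to_subtype
  have step1 : ∀ S : P5, ENNReal.ofReal M * volume (S : Set (Fin d → ℝ)) ≤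
      ∑' T : 𝒯, if (S : Set (Fin d → ℝ)) ⊆ (T : Set (Fin d → ℝ))
        then volume (S : Set (Fin d → ℝ)) else 0 := by
    intro S
    obtain ⟨hSd, hSQ, ⟨F, hFcard, hF⟩, hSmax⟩ := hP5mem S.1 S.2
    have hmemT : ∀ t ∈ F, t ∈ 𝒯 := by
      intro t ht
      obtain ⟨htd, hSt, hPt⟩ := hF t ht
      exact ⟨hPt, S.1, S.2, hSt⟩
    let G : Finset 𝒯 := F.attach.map
      ⟨fun t => ⟨t.1, hmemT t.1 t.2⟩, by
        intro a b h
        apply Subtype.ext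
        have h' := congrArg Subtype.val h; exact h'⟩
    have hGcard : G.card = F.card := by simp [G]
    have heval : (∑ T ∈ G, if (S : Set (Fin d → ℝ)) ⊆ (T : Set (Fin d → ℝ))
        then volume (S : Set (Fin d → ℝ)) else 0)
        = (G.card : ℝ≥0∞) * volume (S : Set (Fin d → ℝ)) := by
      rw [Finset.sum_congr rfl (fun T hT => ?_), Finset.sum_const, nsmul_eq_mul]
      simp only [G, Finset.mem_map, Finset.mem_attach, Function.Embedding.coeFn_mk,
        true_and] at hT
      obtain ⟨t, rfl⟩ := hT
      exact if_pos (hF t.1 t.2).2.1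
    calc ENNReal.ofReal M * volume (S : Set (Fin d → ℝ))
        ≤ (G.card : ℝ≥0∞) * volume (S : Set (Fin d → ℝ)) := by
          apply mul_le_mul_left
          calc ENNReal.ofReal M ≤ ENNReal.ofReal (F.card : ℝ) :=
                ENNReal.ofReal_le_ofReal hFcard
            _ = (F.card : ℝ≥0∞) := ENNReal.ofReal_natCast _
            _ = (G.card : ℝ≥0∞) := by rw [hGcard]
      _ = ∑ T ∈ G, if (S : Set (Fin d → ℝ)) ⊆ (T : Set (Fin d → ℝ))
            then volume (S : Set (Fin d → ℝ)) else 0 := heval.symm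
      _ ≤ _ := ENNReal.sum_le_tsum G
  have step3 : ∀ T : 𝒯, (∑' S : P5, if (S : Set (Fin d → ℝ)) ⊆ (T : Set (Fin d → ℝ))
      then volume (S : Set (Fin d → ℝ)) else 0) ≤ volume (T : Set (Fin d → ℝ)) := by
    intro T
    have hrw : ∀ S : P5, (if (S : Set (Fin d → ℝ)) ⊆ (T : Set (Fin d → ℝ))
        then volume (S : Set (Fin d → ℝ)) else 0)
        = volume (if (S : Set (Fin d → ℝ)) ⊆ (T : Set (Fin d → ℝ))
            then (S : Set (Fin d → ℝ)) else ∅) := by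
      intro S; split <;> simp
    rw [tsum_congr hrw]
    have hdisj : Pairwise (Function.onFun Disjoint fun S : P5 =>
        if (S : Set (Fin d → ℝ)) ⊆ (T : Set (Fin d → ℝ))
          then (S : Set (Fin d → ℝ)) else ∅) := by
      intro S S' hne
      unfold Function.onFun
      dsimp only
      split <;> split
      · exact hP5disj S.1 S.2 S'.1 S'.2 fun h => hne (Subtype.ext h)
      all_goals simp
    rw [← measure_iUnion hdisj (fun S => by
      split
      · exact dyadic_measurable (hP5mem _ S.2).1
      · exact MeasurableSet.empty)]
    apply measure_mono
    apply Set.iUnion_subset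
    intro S
    split
    · assumption
    · exact Set.empty_subset _
  have step4 : (∑' T : 𝒯, volume (T : Set (Fin d → ℝ))) ≤ 2 ^ d * volume Q := by
    have hch : ∀ T : 𝒯, ∃ P ∈ P4, IsDyadicChild P (T : Set (Fin d → ℝ)) := fun T => T.2.1
    choose Φ hΦ4 hΦc using hch
    have hvol : ∀ T : 𝒯, volume (T : Set (Fin d → ℝ)) = 2 ^ d * volume (Φ T) := by
      intro T
      have := (hΦc T).2.2.2
      rwa [Fintype.card_fin] at this
    calc (∑' T : 𝒯, volume (T : Set (Fin d → ℝ)))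
        = ∑' T : 𝒯, 2 ^ d * volume (Φ T) := tsum_congr hvol
      _ = 2 ^ d * ∑' T : 𝒯, volume (Φ T) := ENNReal.tsum_mul_left
      _ = 2 ^ d * volume (⋃ T : 𝒯, Φ T) := by
          rw [measure_iUnion ?_ fun T => dyadic_measurable (hΦc T).1]
          intro T T' hne
          have hPne : Φ T ≠ Φ T' := by
            intro h
            exact hne (Subtype.ext (dyadic_parent_unique hd (hΦc T) (h ▸ hΦc T')))
          exact hP4disj (hΦ4 T) (hΦ4 T') hPne
      _ ≤ 2 ^ d * volume Q := by
          gcongr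
          exact Set.iUnion_subset fun T => (hP4 _ (hΦ4 T)).2
  have key : ENNReal.ofReal M * ∑' S : P5, volume (S : Set (Fin d → ℝ))
      ≤ 2 ^ d * volume Q := by
    rw [← ENNReal.tsum_mul_left]
    calc (∑' S : P5, ENNReal.ofReal M * volume (S : Set (Fin d → ℝ)))
        ≤ ∑' S : P5, ∑' T : 𝒯, if (S : Set (Fin d → ℝ)) ⊆ (T : Set (Fin d → ℝ))
            then volume (S : Set (Fin d → ℝ)) else 0 := ENNReal.tsum_le_tsum step1
      _ = ∑' T : 𝒯, ∑' S : P5, if (S : Set (Fin d → ℝ)) ⊆ (T : Set (Fin d → ℝ))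
            then volume (S : Set (Fin d → ℝ)) else 0 := ENNReal.tsum_comm
      _ ≤ ∑' T : 𝒯, volume (T : Set (Fin d → ℝ)) := ENNReal.tsum_le_tsum step3
      _ ≤ 2 ^ d * volume Q := step4
  have hM0 : ENNReal.ofReal M ≠ 0 := by
    simp only [ne_eq, ENNReal.ofReal_eq_zero, not_le]
    exact hM
  have hMtop : ENNReal.ofReal M ≠ ⊤ := ENNReal.ofReal_ne_top
  have first : ∑' S : P5, volume (S : Set (Fin d → ℝ)) ≤
      ENNReal.ofReal ((2 ^ d : ℝ) / M) * volume Q := by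
    have hrw : ENNReal.ofReal ((2 ^ d : ℝ) / M) * volume Q
        = (2 ^ d * volume Q) / ENNReal.ofReal M := by
      rw [ENNReal.ofReal_div_of_pos hM]
      have h2 : ENNReal.ofReal ((2:ℝ) ^ d) = (2:ℝ≥0∞) ^ d := by
        rw [ENNReal.ofReal_pow (by norm_num)]
        norm_num
      rw [h2, div_eq_mul_inv, div_eq_mul_inv]
      ring
    rw [hrw, ENNReal.le_div_iff_mul_le (Or.inl hM0) (Or.inl hMtop), mul_comm]
    exact key
  refine ⟨first, fun ε hε hMe => ?_⟩
  have : (2 ^ d : ℝ) / M = ε := by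
    rw [hMe]
    have h2 : (2:ℝ) ^ d ≠ 0 := by positivity
    field_simp
  rwa [this] at first

end
end
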